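/- arXiv:1705.02005 — 7 statements merged into one kernel-verified Lean document; each statement's English description precedes it below -/
import Mathlib

section
/- Let M ∈ ℝ^{n×n} be symmetric positive definite and S a nonempty subset of [n]. Then (M_S)⁻¹ ⪯ (M⁻¹)_S in the Loewner order, where (M_S)⁻¹ denotes the matrix obtained by inverting the principal submatrix M_{SS} in place (embedding (M_{SS})⁻¹ back into the rows and columns indexed by S, with zeros elsewhere), and (M⁻¹)_S is the matrix obtained from M⁻¹ by zeroing out rows and columns outside S. -/
open Matrix BigOperators Finset

noncomputable section

/-- `A_S`: zero out entries of `A` outside rows/columns indexed by `S`. -/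
def zeroPad {n : ℕ} (A : Matrix (Fin n) (Fin n) ℝ) (S : Finset (Fin n)) :
    Matrix (Fin n) (Fin n) ℝ :=
  Matrix.of fun i j => if i ∈ S ∧ j ∈ S then A i j else 0

/-- `(M_S)⁻¹`: invert the principal submatrix `M_{SS}` in place, zeros elsewhere. -/
def inPlaceInv {n : ℕ} (M : Matrix (Fin n) (Fin n) ℝ) (S : Finset (Fin n)) :
    Matrix (Fin n) (Fin n) ℝ :=
  Matrix.of fun i j =>
    if hi : i ∈ S then
      if hj : j ∈ S then
        (M.submatrix (fun a : {x // x ∈ S} => (a : Fin n))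
            (fun a : {x // x ∈ S} => (a : Fin n)))⁻¹ ⟨i, hi⟩ ⟨j, hj⟩
      else 0
    else 0

/-- Cauchy–Schwarz for a PSD matrix. -/
lemma cs_psd {n : ℕ} {M : Matrix (Fin n) (Fin n) ℝ} (hM : M.PosSemidef) (u w : Fin n → ℝ) :
    (u ⬝ᵥ M *ᵥ w) ^ 2 ≤ (u ⬝ᵥ M *ᵥ u) * (w ⬝ᵥ M *ᵥ w) := by
  have hsym : ∀ a b : Fin n → ℝ, a ⬝ᵥ M *ᵥ b = b ⬝ᵥ M *ᵥ a := by
    intro a b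
    rw [dotProduct_comm, Matrix.dotProduct_mulVec, ← Matrix.mulVec_transpose]
    have : Mᵀ = M := by
      have := hM.1
      rwa [Matrix.IsHermitian, Matrix.conjTranspose_eq_transpose_of_trivial] at this
    rw [this]
  have key : ∀ t : ℝ, 0 ≤ (w ⬝ᵥ M *ᵥ w) * (t * t) + (2 * (u ⬝ᵥ M *ᵥ w)) * t + (u ⬝ᵥ M *ᵥ u) := by
    intro t
    have h := hM.dotProduct_mulVec_nonneg (u + t • w)
    simp only [star_trivial, add_mulVec, mulVec_add, mulVec_smul, dotProduct_add, add_dotProduct, mulVec_smul,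
      dotProduct_smul, smul_dotProduct, smul_eq_mul] at h
    rw [hsym w u] at h
    nlinarith [h]
  have hd := discrim_le_zero key
  simp only [discrim] at hd
  nlinarith [hd]

/-- Embedding matrix `I_{:S}`. -/
def emb {n : ℕ} (S : Finset (Fin n)) : Matrix (Fin n) {x // x ∈ S} ℝ :=
  Matrix.of fun i a => if i = (a : Fin n) then 1 else 0

lemma emb_sum {n : ℕ} (S : Finset (Fin n)) (i : Fin n) (g : {x // x ∈ S} → ℝ) :
    ∑ a : {x // x ∈ S}, emb S i a * g a = if h : i ∈ S then g ⟨i, h⟩ else 0 := by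
  by_cases hi : i ∈ S
  · rw [dif_pos hi]
    rw [Fintype.sum_eq_single (⟨i, hi⟩ : {x // x ∈ S})]
    · simp [emb]
    · intro b hb
      have : i ≠ (b : Fin n) := fun h => hb (Subtype.ext h.symm)
      simp [emb, this]
  · rw [dif_neg hi]
    apply Finset.sum_eq_zero
    intro a _
    have : i ≠ (a : Fin n) := fun h => hi (h ▸ a.2)
    simp [emb, this]

lemma sum_dite_mem {n : ℕ} (S : Finset (Fin n)) (f : {x // x ∈ S} → ℝ) :
    ∑ i : Fin n, (if h : i ∈ S then f ⟨i, h⟩ else 0) = ∑ a : {x // x ∈ S}, f a := by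
  rw [← Finset.sum_subset (Finset.subset_univ S) (by intro x _ hx; rw [dif_neg hx])]
  rw [Finset.univ_eq_attach, ← Finset.sum_attach S fun i => if h : i ∈ S then f ⟨i, h⟩ else 0]
  apply Finset.sum_congr rfl
  intro a _
  rw [dif_pos a.2]

lemma emb_mulVec {n : ℕ} (S : Finset (Fin n)) (p : {x // x ∈ S} → ℝ) (i : Fin n) :
    (emb S *ᵥ p) i = if h : i ∈ S then p ⟨i, h⟩ else 0 := emb_sum S i p

lemma transfer {n : ℕ} (S : Finset (Fin n)) (N : Matrix (Fin n) (Fin n) ℝ)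
    (p q : {x // x ∈ S} → ℝ) :
    (emb S *ᵥ p) ⬝ᵥ N *ᵥ (emb S *ᵥ q)
      = p ⬝ᵥ (N.submatrix (fun a : {x // x ∈ S} => (a : Fin n))
          (fun a : {x // x ∈ S} => (a : Fin n))) *ᵥ q := by
  have inner : ∀ a : {x // x ∈ S},
      (N *ᵥ (emb S *ᵥ q)) (a : Fin n)
        = ((N.submatrix (fun a : {x // x ∈ S} => (a : Fin n))
            (fun a : {x // x ∈ S} => (a : Fin n))) *ᵥ q) a := by
    intro a
    show ∑ j, N (a : Fin n) j * (emb S *ᵥ q) j = _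
    have : ∀ j, N (a : Fin n) j * (emb S *ᵥ q) j
        = if h : j ∈ S then N (a : Fin n) ((⟨j, h⟩ : {x // x ∈ S}) : Fin n) * q ⟨j, h⟩ else 0 := by
      intro j; rw [emb_mulVec]; split <;> simp
    exact ((Finset.sum_congr rfl fun j _ => this j).trans
      (sum_dite_mem S fun b => N (a : Fin n) (b : Fin n) * q b)).trans rfl
  show ∑ i, (emb S *ᵥ p) i * (N *ᵥ (emb S *ᵥ q)) i = _
  have : ∀ i, (emb S *ᵥ p) i * (N *ᵥ (emb S *ᵥ q)) i
      = if h : i ∈ S then p ⟨i, h⟩ * (N *ᵥ (emb S *ᵥ q)) ((⟨i, h⟩ : {x // x ∈ S}) : Fin n) else 0 := by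
    intro i; rw [emb_mulVec]; split <;> simp
  refine ((Finset.sum_congr rfl fun i _ => this i).trans
    (sum_dite_mem S fun a => p a * (N *ᵥ (emb S *ᵥ q)) (a : Fin n))).trans ?_
  exact Finset.sum_congr rfl fun a _ => by rw [inner a]

lemma emb_dot {n : ℕ} (S : Finset (Fin n)) (p q : {x // x ∈ S} → ℝ) :
    (emb S *ᵥ p) ⬝ᵥ (emb S *ᵥ q) = p ⬝ᵥ q := by
  show ∑ i, (emb S *ᵥ p) i * (emb S *ᵥ q) i = _
  have : ∀ i, (emb S *ᵥ p) i * (emb S *ᵥ q) i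
      = if h : i ∈ S then p ⟨i, h⟩ * q ⟨i, h⟩ else 0 := by
    intro i; rw [emb_mulVec, emb_mulVec]; split <;> simp
  exact ((Finset.sum_congr rfl fun i _ => this i).trans
    (sum_dite_mem S fun a => p a * q a)).trans rfl

lemma sandwich {n : ℕ} (S : Finset (Fin n)) (D : Matrix {x // x ∈ S} {x // x ∈ S} ℝ) :
    emb S * D * (emb S)ᴴ = Matrix.of fun i j =>
      if hi : i ∈ S then (if hj : j ∈ S then D ⟨i, hi⟩ ⟨j, hj⟩ else 0) else 0 := by
  ext i j
  show ∑ b, (∑ a, emb S i a * D a b) * star (emb S j b) = _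
  have : ∀ b, (∑ a, emb S i a * D a b) * star (emb S j b)
      = emb S j b * (if h : i ∈ S then D ⟨i, h⟩ b else 0) := by
    intro b
    rw [emb_sum]
    simp [mul_comm]
  rw [Finset.sum_congr rfl fun b _ => this b, emb_sum]
  by_cases hi : i ∈ S <;> simp [hi]

lemma posDef_sub {n : ℕ} {M : Matrix (Fin n) (Fin n) ℝ} (hM : M.PosDef) (S : Finset (Fin n)) :
    (M.submatrix (fun a : {x // x ∈ S} => (a : Fin n))
      (fun a : {x // x ∈ S} => (a : Fin n))).PosDef := by
  apply PosDef.of_dotProduct_mulVec_pos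
  · exact hM.1.submatrix _
  · intro x hx
    obtain ⟨a₀, ha₀⟩ := Function.ne_iff.mp hx
    have hy : emb S *ᵥ x ≠ 0 := by
      intro h
      apply ha₀
      have := congrFun h (a₀ : Fin n)
      rwa [emb_mulVec, dif_pos a₀.2, Subtype.coe_eta, Pi.zero_apply] at this
    have := hM.dotProduct_mulVec_pos hy
    rw [star_trivial, transfer] at this
    simpa using this

/-- For `M ≻ 0` and `S ≠ ∅`, `(M_S)⁻¹ ⪯ (M⁻¹)_S` in the Loewner order. -/
theorem stmt2 {n : ℕ} (M : Matrix (Fin n) (Fin n) ℝ) (hM : M.PosDef)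
    (S : Finset (Fin n)) (hS : S.Nonempty) :
    (zeroPad M⁻¹ S - inPlaceInv M S).PosSemidef := by
  classical
  have hB := posDef_sub hM S
  have hBinv := hB.inv
  have hBBinv : M.submatrix (fun a : {x // x ∈ S} => (a : Fin n))
      (fun a : {x // x ∈ S} => (a : Fin n)) *
      (M.submatrix (fun a : {x // x ∈ S} => (a : Fin n))
        (fun a : {x // x ∈ S} => (a : Fin n)))⁻¹ = 1 :=
    Matrix.mul_nonsing_inv _ (isUnit_iff_ne_zero.mpr hB.det_pos.ne')
  have hA : ((M⁻¹).submatrix (fun a : {x // x ∈ S} => (a : Fin n))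
      (fun a : {x // x ∈ S} => (a : Fin n))).PosSemidef :=
    hM.inv.posSemidef.submatrix _
  have hD : (((M⁻¹).submatrix (fun a : {x // x ∈ S} => (a : Fin n))
      (fun a : {x // x ∈ S} => (a : Fin n)))
      - (M.submatrix (fun a : {x // x ∈ S} => (a : Fin n))
        (fun a : {x // x ∈ S} => (a : Fin n)))⁻¹).PosSemidef := by
    apply PosSemidef.of_dotProduct_mulVec_nonneg
    · exact hA.1.sub hBinv.1
    · intro x
      simp only [star_trivial, sub_mulVec, dotProduct_sub]
      have hs0 : 0 ≤ x ⬝ᵥ (M.submatrix (fun a : {x // x ∈ S} => (a : Fin n))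
          (fun a : {x // x ∈ S} => (a : Fin n)))⁻¹ *ᵥ x := by
        simpa using hBinv.posSemidef.dotProduct_mulVec_nonneg x
      have ht0 : 0 ≤ x ⬝ᵥ (M⁻¹).submatrix (fun a : {x // x ∈ S} => (a : Fin n))
          (fun a : {x // x ∈ S} => (a : Fin n)) *ᵥ x := by
        simpa using hA.dotProduct_mulVec_nonneg x
      set Binv := (M.submatrix (fun a : {x // x ∈ S} => (a : Fin n))
        (fun a : {x // x ∈ S} => (a : Fin n)))⁻¹ with hBinvdef
      set u := emb S *ᵥ (Binv *ᵥ x) with hu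
      set v := emb S *ᵥ x with hv
      set w := M⁻¹ *ᵥ v with hw
      have hMw : M *ᵥ w = v := by
        rw [hw, mulVec_mulVec, Matrix.mul_nonsing_inv _
          (isUnit_iff_ne_zero.mpr hM.det_pos.ne'), one_mulVec]
      have h1 : u ⬝ᵥ M *ᵥ w = x ⬝ᵥ Binv *ᵥ x := by
        rw [hMw, hu, hv, emb_dot, dotProduct_comm]
      have h2 : u ⬝ᵥ M *ᵥ u = x ⬝ᵥ Binv *ᵥ x := by
        rw [hu, transfer, hBinvdef, mulVec_mulVec, hBBinv, one_mulVec, dotProduct_comm]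
      have h3 : w ⬝ᵥ M *ᵥ w = x ⬝ᵥ (M⁻¹).submatrix (fun a : {x // x ∈ S} => (a : Fin n))
          (fun a : {x // x ∈ S} => (a : Fin n)) *ᵥ x := by
        rw [hMw, dotProduct_comm, hw, hv]
        exact transfer S M⁻¹ x x
      have hcs := cs_psd hM.posSemidef u w
      rw [h1, h2, h3] at hcs
      nlinarith [hcs, hs0, ht0]
  have e1 : zeroPad M⁻¹ S = emb S * ((M⁻¹).submatrix (fun a : {x // x ∈ S} => (a : Fin n))
      (fun a : {x // x ∈ S} => (a : Fin n))) * (emb S)ᴴ := by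
    rw [sandwich]
    ext i j
    simp only [zeroPad, of_apply, submatrix_apply]
    by_cases hi : i ∈ S <;> by_cases hj : j ∈ S <;> simp [hi, hj]
  have e2 : inPlaceInv M S = emb S * (M.submatrix (fun a : {x // x ∈ S} => (a : Fin n))
      (fun a : {x // x ∈ S} => (a : Fin n)))⁻¹ * (emb S)ᴴ := by
    rw [sandwich]
    rfl
  rw [e1, e2, ← Matrix.sub_mul, ← Matrix.mul_sub]
  exact hD.mul_mul_conjTranspose_same (emb S)
end
end

section
/- Let X ∈ ℝ^{n×n} be symmetric positive definite and S' ⊆ S ⊆ [n] with S' nonempty. Then (X_{S'})⁻¹ ⪯ (X_S)⁻¹ in the Loewner order, where (X_T)⁻¹ := I_{:T}(X_{TT})⁻¹ I_{:T}ᵀ denotes the in-place inverse of the principal submatrix indexed by T. -/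
open Matrix BigOperators Finset

noncomputable section

namespace StmtAux

variable {n : ℕ}

/-- Selection matrix `I_{:T}`. -/
def sel (T : Finset (Fin n)) : Matrix (Fin n) {x // x ∈ T} ℝ :=
  Matrix.of fun i a => if (a : Fin n) = i then 1 else 0

/-- Principal submatrix `X_{TT}`. -/
def sub (X : Matrix (Fin n) (Fin n) ℝ) (T : Finset (Fin n)) :
    Matrix {x // x ∈ T} {x // x ∈ T} ℝ :=
  X.submatrix (fun a : {x // x ∈ T} => (a : Fin n)) (fun a : {x // x ∈ T} => (a : Fin n))

lemma sum_subtype_ite {T : Finset (Fin n)} (f : {x // x ∈ T} → ℝ) (i : Fin n) :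
    (∑ a : {x // x ∈ T}, if (a : Fin n) = i then f a else 0) =
      if hi : i ∈ T then f ⟨i, hi⟩ else 0 := by
  split_ifs with hi
  · rw [Fintype.sum_eq_single (⟨i, hi⟩ : {x // x ∈ T})]
    · simp
    · intro b hb
      have hbi : (b : Fin n) ≠ i := fun h => hb (Subtype.ext h)
      simp [hbi]
  · apply Finset.sum_eq_zero
    intro a _
    have hai : (a : Fin n) ≠ i := fun h => hi (h ▸ a.2)
    simp [hai]

lemma sel_mulVec (T : Finset (Fin n)) (x : {x // x ∈ T} → ℝ) (i : Fin n) :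
    (sel T *ᵥ x) i = if hi : i ∈ T then x ⟨i, hi⟩ else 0 := by
  simp only [mulVec, dotProduct, sel, Matrix.of_apply, ite_mul, one_mul, zero_mul]
  exact sum_subtype_ite x i

lemma transpose_sel_eq_conjTranspose (T : Finset (Fin n)) : (sel T)ᵀ = (sel T)ᴴ := by
  ext a i
  simp [conjTranspose_apply]

/-- `I_{:T}ᵀ X I_{:T} = X_{TT}`. -/
lemma transpose_sel_mul_mul (X : Matrix (Fin n) (Fin n) ℝ) (T : Finset (Fin n)) :
    (sel T)ᵀ * X * sel T = sub X T := by
  ext a b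
  have h1 : ((sel T)ᵀ * X) a = fun j => X (a : Fin n) j := by
    funext j
    simp only [Matrix.mul_apply, transpose_apply, sel, Matrix.of_apply, ite_mul, one_mul,
      zero_mul]
    simp
  rw [Matrix.mul_apply]
  simp only [h1]
  simp [sel, sub, mul_ite, mul_one, mul_zero]

/-- `inPlaceInv X T = I_{:T} (X_{TT})⁻¹ I_{:T}ᵀ`. -/
lemma inPlaceInv_eq (X : Matrix (Fin n) (Fin n) ℝ) (T : Finset (Fin n)) :
    inPlaceInv X T = sel T * (sub X T)⁻¹ * (sel T)ᵀ := by
  ext i j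
  have h1 : ∀ b, (sel T * (sub X T)⁻¹) i b =
      if hi : i ∈ T then (sub X T)⁻¹ ⟨i, hi⟩ b else 0 := by
    intro b
    simp only [Matrix.mul_apply, sel, Matrix.of_apply, ite_mul, one_mul, zero_mul]
    exact sum_subtype_ite (fun a => (sub X T)⁻¹ a b) i
  rw [Matrix.mul_apply]
  simp only [transpose_apply, h1]
  simp only [sel, Matrix.of_apply, mul_ite, mul_one, mul_zero]
  rw [sum_subtype_ite (fun b => if hi : i ∈ T then (sub X T)⁻¹ ⟨i, hi⟩ b else 0) j]
  simp only [inPlaceInv, Matrix.of_apply, sub]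
  by_cases hi : i ∈ T <;> by_cases hj : j ∈ T <;> simp [hi, hj]

lemma sub_posDef {X : Matrix (Fin n) (Fin n) ℝ} (hX : X.PosDef) (T : Finset (Fin n)) :
    (sub X T).PosDef := by
  refine Matrix.PosDef.of_dotProduct_mulVec_pos (hX.1.submatrix _) fun x hx => ?_
  have hy : sel T *ᵥ x ≠ 0 := by
    obtain ⟨a, ha⟩ := Function.ne_iff.mp hx
    intro h
    apply ha
    have h2 := congrFun h (a : Fin n)
    rw [sel_mulVec] at h2
    simpa [a.2] using h2
  have h3 := hX.dotProduct_mulVec_pos hy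
  rw [← transpose_sel_mul_mul X T, transpose_sel_eq_conjTranspose]
  simpa only [star_mulVec, dotProduct_mulVec, vecMul_vecMul, Pi.zero_apply] using h3

/-- Key cancellation: `(I_S A⁻¹ I_Sᵀ) X I_{S'} = I_{S'}` for `S' ⊆ S`. -/
lemma mulX_sel {X : Matrix (Fin n) (Fin n) ℝ} (hX : X.PosDef) {S' S : Finset (Fin n)}
    (hsub : S' ⊆ S) :
    sel S * (sub X S)⁻¹ * (sel S)ᵀ * X * sel S' = sel S' := by
  have hA := sub_posDef hX S
  have hinv : (sub X S)⁻¹ * sub X S = 1 :=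
    Matrix.nonsing_inv_mul _ (isUnit_iff_ne_zero.mpr hA.det_pos.ne')
  have e1 : (sel S)ᵀ * X * sel S' = sub X S * ((sel S)ᵀ * sel S') := by
    ext a b
    have h1 : ((sel S)ᵀ * X) a = fun j => X (a : Fin n) j := by
      funext j
      simp only [Matrix.mul_apply, transpose_apply, sel, Matrix.of_apply, ite_mul, one_mul,
        zero_mul]
      simp
    have hQ : ∀ (c : {x // x ∈ S}), ((sel S)ᵀ * sel S') c b =
        if (c : Fin n) = (b : Fin n) then 1 else 0 := by
      intro c
      simp only [Matrix.mul_apply, transpose_apply, sel, Matrix.of_apply]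
      rw [Finset.sum_eq_single (b : Fin n)]
      · simp
      · intro j _ hj
        simp [Ne.symm hj]
      · simp
    rw [Matrix.mul_apply]
    simp only [h1]
    rw [Matrix.mul_apply]
    simp only [hQ, sub, submatrix_apply, mul_ite, mul_one, mul_zero]
    rw [sum_subtype_ite (fun c => X (a : Fin n) (c : Fin n)) (b : Fin n)]
    simp [sel, hsub b.2]
  have e2 : sel S * ((sel S)ᵀ * sel S') = sel S' := by
    ext i b
    have hQ : ∀ (c : {x // x ∈ S}), ((sel S)ᵀ * sel S') c b =
        if (c : Fin n) = (b : Fin n) then 1 else 0 := by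
      intro c
      simp only [Matrix.mul_apply, transpose_apply, sel, Matrix.of_apply]
      rw [Finset.sum_eq_single (b : Fin n)]
      · simp
      · intro j _ hj
        simp [Ne.symm hj]
      · simp
    rw [Matrix.mul_apply]
    simp only [hQ]
    simp only [sel, Matrix.of_apply, ite_mul, one_mul, zero_mul]
    rw [sum_subtype_ite (fun c => if (c : Fin n) = (b : Fin n) then 1 else 0) i]
    by_cases hib : (b : Fin n) = i
    · have hiS : i ∈ S := hib ▸ hsub b.2
      simp [hiS, hib]
    · by_cases hiS : i ∈ S
      · simp only [hib, if_false, dif_pos hiS]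
        rw [if_neg (fun h => hib h.symm)]
      · simp [hiS, hib]
  calc sel S * (sub X S)⁻¹ * (sel S)ᵀ * X * sel S'
      = sel S * ((sub X S)⁻¹ * ((sel S)ᵀ * X * sel S')) := by
        simp only [Matrix.mul_assoc]
    _ = sel S * ((sub X S)⁻¹ * (sub X S * ((sel S)ᵀ * sel S'))) := by rw [e1]
    _ = sel S * ((sel S)ᵀ * sel S') := by
        rw [← Matrix.mul_assoc ((sub X S)⁻¹), hinv, Matrix.one_mul]
    _ = sel S' := e2

/-- `M_S X M_{S'} = M_{S'}` for `S' ⊆ S`. -/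
lemma key {X : Matrix (Fin n) (Fin n) ℝ} (hX : X.PosDef) {S' S : Finset (Fin n)}
    (hsub : S' ⊆ S) :
    (sel S * (sub X S)⁻¹ * (sel S)ᵀ) * X * (sel S' * (sub X S')⁻¹ * (sel S')ᵀ)
      = sel S' * (sub X S')⁻¹ * (sel S')ᵀ := by
  have h1 : (sel S * (sub X S)⁻¹ * (sel S)ᵀ) * X * (sel S' * (sub X S')⁻¹ * (sel S')ᵀ)
      = (sel S * (sub X S)⁻¹ * (sel S)ᵀ * X * sel S') * ((sub X S')⁻¹ * (sel S')ᵀ) := by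
    simp only [Matrix.mul_assoc]
  rw [h1, mulX_sel hX hsub, ← Matrix.mul_assoc]

lemma M_symm {X : Matrix (Fin n) (Fin n) ℝ} (hX : X.PosDef) (T : Finset (Fin n)) :
    (sel T * (sub X T)⁻¹ * (sel T)ᵀ)ᵀ = sel T * (sub X T)⁻¹ * (sel T)ᵀ := by
  have hA : (sub X T)ᵀ = sub X T := by
    have h := (sub_posDef hX T).1
    rw [Matrix.IsHermitian] at h
    ext a b
    have := congrFun (congrFun h a) b
    simpa [conjTranspose_apply] using this
  rw [Matrix.transpose_mul, Matrix.transpose_mul, Matrix.transpose_transpose,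
    Matrix.transpose_nonsing_inv, hA, Matrix.mul_assoc]

end StmtAux

open StmtAux in
/-- For `X ≻ 0` and `∅ ≠ S' ⊆ S`, `(X_{S'})⁻¹ ⪯ (X_S)⁻¹` in the Loewner order. -/
theorem stmt3 {n : ℕ} (X : Matrix (Fin n) (Fin n) ℝ) (hX : X.PosDef)
    (S' S : Finset (Fin n)) (hS' : S'.Nonempty) (hsub : S' ⊆ S) :
    (inPlaceInv X S - inPlaceInv X S').PosSemidef := by
  set M : Matrix (Fin n) (Fin n) ℝ := sel S * (sub X S)⁻¹ * (sel S)ᵀ with hM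
  set M' : Matrix (Fin n) (Fin n) ℝ := sel S' * (sub X S')⁻¹ * (sel S')ᵀ with hM'
  have hXt : Xᵀ = X := by
    have h := hX.1
    rw [Matrix.IsHermitian] at h
    ext a b
    have := congrFun (congrFun h a) b
    simpa [conjTranspose_apply] using this
  have k1 : M * X * M = M := key hX (le_refl S)
  have k2 : M * X * M' = M' := key hX hsub
  have k4 : M' * X * M' = M' := key hX (le_refl S')
  have hMs : Mᵀ = M := M_symm hX S
  have hM's : M'ᵀ = M' := M_symm hX S'
  have k3 : M' * X * M = M' := by
    calc M' * X * M = M'ᵀ * (Xᵀ * Mᵀ) := by rw [hMs, hM's, hXt, Matrix.mul_assoc]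
      _ = (M * X * M')ᵀ := by rw [← Matrix.transpose_mul, ← Matrix.transpose_mul]
      _ = M'ᵀ := by rw [k2]
      _ = M' := hM's
  have hD : (M - M') * X * (M - M') = M - M' := by
    rw [Matrix.sub_mul, Matrix.sub_mul, Matrix.mul_sub, Matrix.mul_sub, k1, k2, k3, k4]
    abel
  have hDh : (M - M')ᴴ = M - M' := by
    have h2 : (M - M')ᴴ = (M - M')ᵀ := by
      ext i j
      simp [conjTranspose_apply, Matrix.transpose_apply]
    rw [h2, Matrix.transpose_sub, hMs, hM's]
  have hps := hX.posSemidef.conjTranspose_mul_mul_same (M - M')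
  rw [hDh, hD] at hps
  rw [inPlaceInv_eq X S, inPlaceInv_eq X S']
  exact hps
end
end

section
/- Let G ⪯ M be symmetric positive definite n×n matrices and Ŝ a proper non-vacuous random subset of [n]. Define σ₁ = λ_min(G^{1/2} E[(M_Ŝ)⁻¹] G^{1/2}) and θ = λ_max(G^{1/2} E[(M_Ŝ)⁻¹] G^{1/2}). Then 0 ≤ σ₁ ≤ θ ≤ 1. -/
open Matrix BigOperators Finset

noncomputable section

open scoped ComplexOrder in
/-- The square root of a positive semidefinite matrix, as defined in the older Mathlib
(removed since): `U * diagonal (√ eigenvalues) * Uᴴ`. -/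
def Matrix.PosSemidef.sqrt {n 𝕜 : Type*} [Fintype n] [DecidableEq n] [RCLike 𝕜]
    {A : Matrix n n 𝕜} (hA : A.PosSemidef) : Matrix n n 𝕜 :=
  hA.1.eigenvectorUnitary.1 * diagonal ((↑) ∘ (√·) ∘ hA.1.eigenvalues) *
    (star hA.1.eigenvectorUnitary : Matrix n n 𝕜)

namespace StmtAux

variable {n : ℕ}

lemma sum_support (S : Finset (Fin n)) (f : Fin n → ℝ)
    (hf : ∀ k ∉ S, f k = 0) :
    (∑ k, f k) = ∑ a : {x // x ∈ S}, f (a : Fin n) := by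
  rw [Finset.sum_coe_sort S f]
  exact (Finset.sum_subset (Finset.subset_univ S) (fun k _ hk => hf k hk)).symm

lemma sum_mulVec {ι : Type*} (s : Finset ι) (f : ι → Matrix (Fin n) (Fin n) ℝ)
    (v : Fin n → ℝ) : (∑ i ∈ s, f i) *ᵥ v = ∑ i ∈ s, (f i) *ᵥ v := by
  ext j
  simp only [Matrix.mulVec, dotProduct, Finset.sum_apply, Matrix.sum_apply,
    Finset.sum_mul]
  rw [Finset.sum_comm]

lemma dotProduct_sum {ι : Type*} (s : Finset ι) (x : Fin n → ℝ)
    (f : ι → (Fin n → ℝ)) : x ⬝ᵥ (∑ i ∈ s, f i) = ∑ i ∈ s, x ⬝ᵥ f i := by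
  simp only [dotProduct, Finset.sum_apply, Finset.mul_sum]
  rw [Finset.sum_comm]

lemma conj_quad (P Q : Matrix (Fin n) (Fin n) ℝ) (y : Fin n → ℝ) :
    (P *ᵥ y) ⬝ᵥ (Q *ᵥ (P *ᵥ y)) = y ⬝ᵥ ((Pᵀ * Q * P) *ᵥ y) := by
  rw [Matrix.mulVec_mulVec, Matrix.dotProduct_mulVec, Matrix.vecMul_mulVec,
    Matrix.dotProduct_mulVec, Matrix.mul_assoc]

lemma dot_symm_mulVec (sq : Matrix (Fin n) (Fin n) ℝ) (hsqH : sqᵀ = sq)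
    (x v : Fin n → ℝ) : x ⬝ᵥ (sq *ᵥ v) = (sq *ᵥ x) ⬝ᵥ v := by
  rw [Matrix.dotProduct_mulVec, ← hsqH, Matrix.vecMul_transpose, hsqH]

lemma inPlaceInv_transpose (M : Matrix (Fin n) (Fin n) ℝ) (hM : M.IsHermitian)
    (S : Finset (Fin n)) : (inPlaceInv M S)ᵀ = inPlaceInv M S := by
  have hMt : Mᵀ = M := by
    ext i j
    simpa using hM.apply i j
  have hA : (M.submatrix (fun a : {x // x ∈ S} => (a : Fin n))
      (fun a : {x // x ∈ S} => (a : Fin n)))ᵀ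
      = M.submatrix (fun a : {x // x ∈ S} => (a : Fin n))
          (fun a : {x // x ∈ S} => (a : Fin n)) := by
    ext a b
    simp only [Matrix.transpose_apply, Matrix.submatrix_apply]
    exact congrFun (congrFun hMt _) _
  have hAinv : ((M.submatrix (fun a : {x // x ∈ S} => (a : Fin n))
      (fun a : {x // x ∈ S} => (a : Fin n)))⁻¹)ᵀ
      = (M.submatrix (fun a : {x // x ∈ S} => (a : Fin n))
          (fun a : {x // x ∈ S} => (a : Fin n)))⁻¹ := by
    rw [Matrix.transpose_nonsing_inv, hA]
  ext i j
  simp only [Matrix.transpose_apply, inPlaceInv, Matrix.of_apply]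
  by_cases hi : i ∈ S <;> by_cases hj : j ∈ S <;> simp only [hi, hj, dif_pos, dif_neg,
    not_false_iff, dite_true, dite_false]
  exact congrFun (congrFun hAinv ⟨j, hj⟩) ⟨i, hi⟩ ▸ (congrFun (congrFun hAinv.symm ⟨i, hi⟩) ⟨j, hj⟩).symm ▸ (congrFun (congrFun hAinv ⟨j, hj⟩) ⟨i, hi⟩).symm ▸ rfl

lemma inPlaceInv_mul_mul (M : Matrix (Fin n) (Fin n) ℝ) (S : Finset (Fin n)) :
    inPlaceInv M S * M * inPlaceInv M S = inPlaceInv M S := by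
  set A := M.submatrix (fun a : {x // x ∈ S} => (a : Fin n))
      (fun a : {x // x ∈ S} => (a : Fin n)) with hAdef
  by_cases hu : IsUnit A.det
  · ext i j
    by_cases hi : i ∈ S
    · by_cases hj : j ∈ S
      · have h1 : ∀ k : Fin n, (M * inPlaceInv M S) k j
            = ∑ b : {x // x ∈ S}, M k (b : Fin n) * A⁻¹ b ⟨j, hj⟩ := by
          intro k
          rw [Matrix.mul_apply]
          rw [sum_support S _ (fun l hl => by simp [inPlaceInv, hl])]
          refine Finset.sum_congr rfl fun b _ => ?_
          simp [inPlaceInv, hj, b.2, hAdef]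
        rw [Matrix.mul_assoc, Matrix.mul_apply]
        rw [sum_support S _ (fun k hk => by simp [inPlaceInv, hk])]
        have h2 : ∑ a : {x // x ∈ S},
            inPlaceInv M S i (a : Fin n) * (M * inPlaceInv M S) (a : Fin n) j
            = (A⁻¹ * (A * A⁻¹)) ⟨i, hi⟩ ⟨j, hj⟩ := by
          rw [Matrix.mul_apply]
          refine Finset.sum_congr rfl fun a _ => ?_
          rw [h1, Matrix.mul_apply]
          congr 1
          · simp [inPlaceInv, hi, a.2, hAdef]
        rw [h2, Matrix.mul_nonsing_inv _ hu, Matrix.mul_one]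
        simp [inPlaceInv, hi, hj, hAdef]
      · simp [inPlaceInv, Matrix.mul_apply, hj]
    · simp [inPlaceInv, Matrix.mul_apply, hi]
  · have hz : A⁻¹ = 0 := Matrix.nonsing_inv_apply_not_isUnit _ hu
    have hN : inPlaceInv M S = 0 := by
      ext i j
      simp only [inPlaceInv, Matrix.of_apply, Matrix.zero_apply]
      split_ifs with h1 h2
      · rw [← hAdef, hz]; simp
      · rfl
      · rfl
    rw [hN]
    simp

lemma dotProduct_self_nonneg (v : Fin n → ℝ) : 0 ≤ v ⬝ᵥ v :=
  Finset.sum_nonneg fun i _ => mul_self_nonneg _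

/-- Per-subset quadratic form bounds, abstract version. -/
lemma key' (M G N sq : Matrix (Fin n) (Fin n) ℝ) (hM : M.PosSemidef)
    (hGM : (M - G).PosSemidef) (hNt : Nᵀ = N) (hNMN : N * M * N = N)
    (hsqH : sqᵀ = sq) (hsq2 : sq * sq = G) (x : Fin n → ℝ) :
    0 ≤ (sq *ᵥ x) ⬝ᵥ (N *ᵥ (sq *ᵥ x)) ∧
      (sq *ᵥ x) ⬝ᵥ (N *ᵥ (sq *ᵥ x)) ≤ x ⬝ᵥ x := by
  have hMu : (N *ᵥ (sq *ᵥ x)) ⬝ᵥ (M *ᵥ (N *ᵥ (sq *ᵥ x)))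
      = (sq *ᵥ x) ⬝ᵥ (N *ᵥ (sq *ᵥ x)) := by
    rw [conj_quad, hNt, hNMN]
  have htnn : 0 ≤ (sq *ᵥ x) ⬝ᵥ (N *ᵥ (sq *ᵥ x)) := by
    rw [← hMu]
    simpa using hM.dotProduct_mulVec_nonneg (N *ᵥ (sq *ᵥ x))
  refine ⟨htnn, ?_⟩
  have hGu : (N *ᵥ (sq *ᵥ x)) ⬝ᵥ (G *ᵥ (N *ᵥ (sq *ᵥ x)))
      ≤ (sq *ᵥ x) ⬝ᵥ (N *ᵥ (sq *ᵥ x)) := by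
    have h0 := hGM.dotProduct_mulVec_nonneg (N *ᵥ (sq *ᵥ x))
    simp only [star_trivial, Matrix.sub_mulVec, dotProduct_sub] at h0
    rw [hMu] at h0
    linarith
  have hsux : (sq *ᵥ (N *ᵥ (sq *ᵥ x))) ⬝ᵥ x = (sq *ᵥ x) ⬝ᵥ (N *ᵥ (sq *ᵥ x)) := by
    rw [← dot_symm_mulVec sq hsqH x (N *ᵥ (sq *ᵥ x)), dotProduct_comm,
      dot_symm_mulVec sq hsqH]
  have hGuu : (sq *ᵥ (N *ᵥ (sq *ᵥ x))) ⬝ᵥ (sq *ᵥ (N *ᵥ (sq *ᵥ x)))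
      = (N *ᵥ (sq *ᵥ x)) ⬝ᵥ (G *ᵥ (N *ᵥ (sq *ᵥ x))) := by
    rw [← dot_symm_mulVec sq hsqH (N *ᵥ (sq *ᵥ x)) (sq *ᵥ (N *ᵥ (sq *ᵥ x))),
      show sq *ᵥ (sq *ᵥ (N *ᵥ (sq *ᵥ x))) = G *ᵥ (N *ᵥ (sq *ᵥ x)) from by
        rw [Matrix.mulVec_mulVec (N *ᵥ (sq *ᵥ x)) sq sq, hsq2]]
  have hsq0 := dotProduct_self_nonneg (fun i => x i - (sq *ᵥ (N *ᵥ (sq *ᵥ x))) i)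
  have hexp : (fun i => x i - (sq *ᵥ (N *ᵥ (sq *ᵥ x))) i) ⬝ᵥ
        (fun i => x i - (sq *ᵥ (N *ᵥ (sq *ᵥ x))) i)
      = x ⬝ᵥ x - 2 * ((sq *ᵥ (N *ᵥ (sq *ᵥ x))) ⬝ᵥ x)
        + (sq *ᵥ (N *ᵥ (sq *ᵥ x))) ⬝ᵥ (sq *ᵥ (N *ᵥ (sq *ᵥ x))) := by
    simp only [dotProduct, Finset.mul_sum]
    rw [← Finset.sum_sub_distrib, ← Finset.sum_add_distrib]
    refine Finset.sum_congr rfl fun i _ => ?_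
    ring
  rw [hsux] at hexp
  rw [hGuu] at hexp
  nlinarith [hsq0, hexp, hGu]

/-- Per-subset quadratic form bounds. -/
lemma key_s4 (M G : Matrix (Fin n) (Fin n) ℝ) (hM : M.PosSemidef)
    (hGM : (M - G).PosSemidef)
    (sq : Matrix (Fin n) (Fin n) ℝ) (hsqH : sqᵀ = sq) (hsq2 : sq * sq = G)
    (S : Finset (Fin n)) (x : Fin n → ℝ) :
    0 ≤ (sq *ᵥ x) ⬝ᵥ (inPlaceInv M S *ᵥ (sq *ᵥ x)) ∧
      (sq *ᵥ x) ⬝ᵥ (inPlaceInv M S *ᵥ (sq *ᵥ x)) ≤ x ⬝ᵥ x :=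
  key' M G (inPlaceInv M S) sq hM hGM (inPlaceInv_transpose M hM.1 S)
    (inPlaceInv_mul_mul M S) hsqH hsq2 x

end StmtAux

/-- For `0 ≺ G ⪯ M` and a proper non-vacuous sampling `Ŝ` (weight `w`),
with `σ₁ = λmin(G^{1/2} E[(M_Ŝ)⁻¹] G^{1/2})` and `θ = λmax` of the same matrix:
`0 ≤ σ₁ ≤ θ ≤ 1`. -/
theorem stmt4 {n : ℕ} (hn : 0 < n) (G M : Matrix (Fin n) (Fin n) ℝ)
    (hG : G.PosDef) (hM : M.PosDef) (hGM : (M - G).PosSemidef)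
    (w : Finset (Fin n) → ℝ) (hw0 : ∀ S, 0 ≤ w S)
    (hw1 : ∑ S : Finset (Fin n), w S = 1) (hvac : w ∅ = 0)
    (hprop : ∀ i : Fin n,
      0 < ∑ S ∈ Finset.univ.filter (fun S : Finset (Fin n) => i ∈ S), w S)
    (X : Matrix (Fin n) (Fin n) ℝ)
    (hXdef : X = hG.posSemidef.sqrt *
      (∑ S : Finset (Fin n), w S • inPlaceInv M S) * hG.posSemidef.sqrt)
    (hX : X.IsHermitian) :
    0 ≤ (⨅ i, hX.eigenvalues i) ∧
      (⨅ i, hX.eigenvalues i) ≤ (⨆ i, hX.eigenvalues i) ∧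
      (⨆ i, hX.eigenvalues i) ≤ 1 := by
  set sq := hG.posSemidef.sqrt with hsq
  have hsqH : sqᵀ = sq := by
    rw [hsq, Matrix.PosSemidef.sqrt]
    simp only [Matrix.star_eq_conjTranspose, Matrix.conjTranspose_eq_transpose_of_trivial,
      Matrix.transpose_mul, Matrix.transpose_transpose, Matrix.diagonal_transpose,
      Matrix.mul_assoc]
  have hsq2 : sq * sq = G := by
    have key_s4 : ∀ (U D sU : Matrix (Fin n) (Fin n) ℝ), sU * U = 1 →
        U * D * sU * (U * D * sU) = U * (D * D) * sU := by
      intro U D sU h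
      calc U * D * sU * (U * D * sU) = U * D * (sU * U) * D * sU := by
            simp only [Matrix.mul_assoc]
        _ = U * (D * D) * sU := by rw [h, Matrix.mul_one]; simp only [Matrix.mul_assoc]
    rw [hsq, Matrix.PosSemidef.sqrt, key_s4 _ _ _ (Unitary.coe_star_mul_self _)]
    conv_rhs => rw [hG.posSemidef.1.spectral_theorem, Unitary.conjStarAlgAut_apply]
    rw [Matrix.diagonal_mul_diagonal]
    congr 2
    funext i
    funext j
    by_cases h : i = j
    · subst h
      simp [Real.mul_self_sqrt (hG.posSemidef.eigenvalues_nonneg i)]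
    · simp [Matrix.diagonal_apply_ne _ h]
  -- quadratic form bounds for X
  have hquad : ∀ x : Fin n → ℝ, 0 ≤ x ⬝ᵥ (X *ᵥ x) ∧ x ⬝ᵥ (X *ᵥ x) ≤ x ⬝ᵥ x := by
    intro x
    have hXx : x ⬝ᵥ (X *ᵥ x) = ∑ S : Finset (Fin n),
        w S * ((sq *ᵥ x) ⬝ᵥ (inPlaceInv M S *ᵥ (sq *ᵥ x))) := by
      rw [hXdef, ← Matrix.mulVec_mulVec, ← Matrix.mulVec_mulVec]
      rw [Matrix.dotProduct_mulVec x sq, ← Matrix.mulVec_transpose, hsqH]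
      rw [StmtAux.sum_mulVec, StmtAux.dotProduct_sum]
      refine Finset.sum_congr rfl fun S _ => ?_
      rw [Matrix.smul_mulVec, dotProduct_smul]
      simp
    have hterm := fun S => StmtAux.key_s4 M G hM.posSemidef hGM sq hsqH hsq2 S x
    constructor
    · rw [hXx]
      exact Finset.sum_nonneg fun S _ => mul_nonneg (hw0 S) (hterm S).1
    · rw [hXx]
      calc ∑ S : Finset (Fin n), w S * ((sq *ᵥ x) ⬝ᵥ (inPlaceInv M S *ᵥ (sq *ᵥ x)))
          ≤ ∑ S : Finset (Fin n), w S * (x ⬝ᵥ x) := by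
            refine Finset.sum_le_sum fun S _ => ?_
            exact mul_le_mul_of_nonneg_left (hterm S).2 (hw0 S)
        _ = x ⬝ᵥ x := by rw [← Finset.sum_mul, hw1, one_mul]
  -- eigenvalue bounds
  have heig : ∀ i, 0 ≤ hX.eigenvalues i ∧ hX.eigenvalues i ≤ 1 := by
    intro i
    set v : Fin n → ℝ := ⇑(hX.eigenvectorBasis i) with hv
    have hmv : X *ᵥ v = hX.eigenvalues i • v := hX.mulVec_eigenvectorBasis i
    have hvv : v ⬝ᵥ v = 1 := by
      have hnorm : ‖hX.eigenvectorBasis i‖ = 1 := hX.eigenvectorBasis.orthonormal.1 i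
      have : (inner ℝ (hX.eigenvectorBasis i) (hX.eigenvectorBasis i) : ℝ) = 1 := by
        rw [real_inner_self_eq_norm_sq, hnorm]; norm_num
      rw [EuclideanSpace.inner_eq_star_dotProduct] at this
      simpa using this
    have hq : v ⬝ᵥ (X *ᵥ v) = hX.eigenvalues i := by
      rw [hmv, dotProduct_smul, hvv]
      simp
    have := hquad v
    rw [hq, hvv] at this
    exact this
  have hne : Nonempty (Fin n) := ⟨⟨0, hn⟩⟩
  have hbddA : BddAbove (Set.range fun i => hX.eigenvalues i) :=
    Set.Finite.bddAbove (Set.finite_range _)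
  have hbddB : BddBelow (Set.range fun i => hX.eigenvalues i) :=
    Set.Finite.bddBelow (Set.finite_range _)
  refine ⟨?_, ?_, ?_⟩
  · exact le_ciInf fun i => (heig i).1
  · exact le_trans (ciInf_le hbddB ⟨0, hn⟩) (le_ciSup hbddA ⟨0, hn⟩)
  · exact ciSup_le fun i => (heig i).2
end
end

section
/- Let f: ℝⁿ → ℝ be differentiable with positive definite matrices G ⪯ M such that f(x)+⟨∇f(x),h⟩+½⟨h,Gh⟩ ≤ f(x+h) ≤ f(x)+⟨∇f(x),h⟩+½⟨h,Mh⟩ for all x,h. Let x* be the minimizer of f. Then for all x, f(x) − f(x*) ≤ ½⟨∇f(x), G⁻¹∇f(x)⟩. -/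
open Matrix BigOperators Finset

noncomputable section

private lemma quad_lb {n : ℕ} (G : Matrix (Fin n) (Fin n) ℝ) (hG : G.PosDef)
    (gx h : Fin n → ℝ) :
    -((1/2) * (gx ⬝ᵥ (G⁻¹ *ᵥ gx))) ≤ gx ⬝ᵥ h + (1/2) * (h ⬝ᵥ (G *ᵥ h)) := by
  have hinv : G * G⁻¹ = 1 :=
    mul_nonsing_inv G (isUnit_iff_ne_zero.mpr hG.det_pos.ne')
  set u := h + G⁻¹ *ᵥ gx with hu
  have key : u ⬝ᵥ (G *ᵥ u) = h ⬝ᵥ (G *ᵥ h) + 2 * (gx ⬝ᵥ h) + gx ⬝ᵥ (G⁻¹ *ᵥ gx) := by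
    have hGg : G *ᵥ (G⁻¹ *ᵥ gx) = gx := by
      rw [mulVec_mulVec, hinv, one_mulVec]
    have hsymG : Gᵀ = G := hG.isHermitian
    simp only [hu, mulVec_add, dotProduct_add, add_dotProduct, hGg]
    have h1 : (G⁻¹ *ᵥ gx) ⬝ᵥ (G *ᵥ h) = gx ⬝ᵥ h := by
      rw [dotProduct_mulVec, ← mulVec_transpose, hsymG, hGg]
    have h2 : h ⬝ᵥ gx = gx ⬝ᵥ h := dotProduct_comm _ _
    have h3 : (G⁻¹ *ᵥ gx) ⬝ᵥ gx = gx ⬝ᵥ (G⁻¹ *ᵥ gx) := dotProduct_comm _ _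
    ring_nf
    rw [h1, h2, h3]
    ring
  have hpos : 0 ≤ u ⬝ᵥ (G *ᵥ u) := by simpa using hG.posSemidef.dotProduct_mulVec_nonneg u
  nlinarith [key, hpos]

/-- Strong convexity with matrix `G` (and smoothness with `M`) imply
`f(x) - f(x*) ≤ ½⟨∇f(x), G⁻¹ ∇f(x)⟩`. -/
theorem stmt5 {n : ℕ} (f : (Fin n → ℝ) → ℝ) (g : (Fin n → ℝ) → (Fin n → ℝ))
    (G M : Matrix (Fin n) (Fin n) ℝ) (hG : G.PosDef) (hM : M.PosDef)
    (hGM : (M - G).PosSemidef)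
    (hlower : ∀ x h, f x + (g x ⬝ᵥ h) + (1/2) * (h ⬝ᵥ (G *ᵥ h)) ≤ f (x + h))
    (hupper : ∀ x h, f (x + h) ≤ f x + (g x ⬝ᵥ h) + (1/2) * (h ⬝ᵥ (M *ᵥ h)))
    (xstar : Fin n → ℝ) (hstar : ∀ y, f xstar ≤ f y) :
    ∀ x, f x - f xstar ≤ (1/2) * (g x ⬝ᵥ (G⁻¹ *ᵥ g x)) := by
  intro x
  have h1 := hlower x (xstar - x)
  have h2 : x + (xstar - x) = xstar := by ring
  rw [h2] at h1
  have h3 := quad_lb G hG (g x) (xstar - x)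
  linarith
end
end

section
/- Let M ∈ ℝ^{n×n} be symmetric positive definite and let Ŝ be the τ-list sampling, which picks uniformly at random one of the n sets of τ cyclically consecutive indices {i, i+1, ..., i+τ−1 (mod n)}. Then θ = λ_max(M^{1/2} E[(M_Ŝ)⁻¹] M^{1/2}) ≤ (τ/n)·cond(M), where cond(M) = λ_max(M)/λ_min(M). -/
open Matrix BigOperators Finset
open scoped MatrixOrder Fin.NatCast

noncomputable section

variable {m : Type*} [Fintype m] [DecidableEq m]

lemma quadform_eq_double (A : Matrix m m ℝ) (x : m → ℝ) :
    x ⬝ᵥ A *ᵥ x = ∑ i, ∑ j, x i * A i j * x j := by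
  simp [dotProduct, mulVec, Finset.mul_sum, mul_assoc]

lemma double_sum_restrict {α : Type*} [Fintype α] [DecidableEq α] (S : Finset α)
    (f : α → α → ℝ) (hf : ∀ i j, i ∉ S ∨ j ∉ S → f i j = 0) :
    ∑ i : α, ∑ j : α, f i j = ∑ a : {x // x ∈ S}, ∑ b : {x // x ∈ S}, f a b := by
  have h1 : ∑ i : α, ∑ j : α, f i j = ∑ i ∈ S, ∑ j ∈ S, f i j := by
    rw [← Finset.sum_subset (Finset.subset_univ S)
      (fun x _ hx => Finset.sum_eq_zero fun j _ => hf x j (Or.inl hx))]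
    exact Finset.sum_congr rfl fun i _ =>
      (Finset.sum_subset (Finset.subset_univ S) (fun j _ hj => hf i j (Or.inr hj))).symm
  rw [h1, ← Finset.sum_coe_sort S (fun a => ∑ b ∈ S, f a b)]
  exact Finset.sum_congr rfl fun a _ => (Finset.sum_coe_sort S (fun b => f a b)).symm

lemma inv_quadform_le (B : Matrix m m ℝ) (hB : B.PosDef) {μ : ℝ} (hμ : 0 < μ)
    (hlb : ∀ v : m → ℝ, μ * (v ⬝ᵥ v) ≤ v ⬝ᵥ B *ᵥ v) (v : m → ℝ) :
    v ⬝ᵥ B⁻¹ *ᵥ v ≤ μ⁻¹ * (v ⬝ᵥ v) := by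
  set w := B⁻¹ *ᵥ v with hw
  have hBw : B *ᵥ w = v := by
    rw [hw, mulVec_mulVec, Matrix.mul_nonsing_inv _ hB.det_pos.ne'.isUnit, one_mulVec]
  have h1 : μ * (w ⬝ᵥ w) ≤ w ⬝ᵥ v := by
    have := hlb w; rwa [hBw] at this
  have hcs : (w ⬝ᵥ v) ^ 2 ≤ (w ⬝ᵥ w) * (v ⬝ᵥ v) := by
    have := Finset.sum_mul_sq_le_sq_mul_sq Finset.univ w v
    simpa [dotProduct, sq, Finset.mul_sum, mul_assoc] using this
  have hvv : 0 ≤ v ⬝ᵥ v := Finset.sum_nonneg fun i _ => mul_self_nonneg _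
  have hww : 0 ≤ w ⬝ᵥ w := Finset.sum_nonneg fun i _ => mul_self_nonneg _
  have hgoal : v ⬝ᵥ B⁻¹ *ᵥ v = w ⬝ᵥ v := dotProduct_comm _ _
  rw [hgoal]
  rcases le_or_gt (w ⬝ᵥ v) 0 with ht | ht
  · exact ht.trans (mul_nonneg (inv_nonneg.mpr hμ.le) hvv)
  · have key : μ * (w ⬝ᵥ v) ≤ v ⬝ᵥ v := by nlinarith [mul_le_mul_of_nonneg_right h1 hvv]
    calc w ⬝ᵥ v = μ⁻¹ * (μ * (w ⬝ᵥ v)) := by field_simp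
    _ ≤ μ⁻¹ * (v ⬝ᵥ v) := by
        exact mul_le_mul_of_nonneg_left key (inv_nonneg.mpr hμ.le)

lemma rayleigh_core {A : Matrix m m ℝ} (hA : A.IsHermitian) (x : m → ℝ) :
    ∃ y : m → ℝ, y ⬝ᵥ y = x ⬝ᵥ x ∧ x ⬝ᵥ A *ᵥ x = ∑ i, hA.eigenvalues i * (y i) ^ 2 := by
  set U : Matrix m m ℝ := (hA.eigenvectorUnitary : Matrix m m ℝ) with hU
  have hst : star U = Uᵀ := by
    ext i j; simp [Matrix.star_apply]
  have hUU : U * Uᵀ = 1 := by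
    rw [← hst]; exact (Matrix.mem_unitaryGroup_iff).mp hA.eigenvectorUnitary.2
  refine ⟨Uᵀ *ᵥ x, ?_, ?_⟩
  · rw [dotProduct_mulVec, vecMul_transpose, mulVec_mulVec, hUU, one_mulVec]
  · conv_lhs => rw [hA.spectral_theorem]
    simp only [Unitary.conjStarAlgAut_apply, Unitary.coe_star]
    rw [← hU]
    have hdiag : (Matrix.diagonal (RCLike.ofReal ∘ hA.eigenvalues) : Matrix m m ℝ)
        = Matrix.diagonal hA.eigenvalues := rfl
    rw [hst, hdiag, ← mulVec_mulVec, ← mulVec_mulVec, dotProduct_mulVec,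
      ← mulVec_transpose]
    simp only [dotProduct, mulVec_diagonal]
    exact Finset.sum_congr rfl fun i _ => by ring

lemma dot_eq_sum_sq (y : m → ℝ) : y ⬝ᵥ y = ∑ i, y i ^ 2 := by
  simp [dotProduct, sq]

lemma quadform_le_of_eigen_le {A : Matrix m m ℝ} (hA : A.IsHermitian) {c : ℝ}
    (h : ∀ i, hA.eigenvalues i ≤ c) (x : m → ℝ) :
    x ⬝ᵥ A *ᵥ x ≤ c * (x ⬝ᵥ x) := by
  obtain ⟨y, hy1, hy2⟩ := rayleigh_core hA x
  rw [hy2, ← hy1, dot_eq_sum_sq, Finset.mul_sum]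
  exact Finset.sum_le_sum fun i _ => mul_le_mul_of_nonneg_right (h i) (sq_nonneg _)

lemma quadform_ge_of_eigen_ge {A : Matrix m m ℝ} (hA : A.IsHermitian) {c : ℝ}
    (h : ∀ i, c ≤ hA.eigenvalues i) (x : m → ℝ) :
    c * (x ⬝ᵥ x) ≤ x ⬝ᵥ A *ᵥ x := by
  obtain ⟨y, hy1, hy2⟩ := rayleigh_core hA x
  rw [hy2, ← hy1, dot_eq_sum_sq, Finset.mul_sum]
  exact Finset.sum_le_sum fun i _ => mul_le_mul_of_nonneg_right (h i) (sq_nonneg _)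

lemma window_bound {n : ℕ} (M : Matrix (Fin n) (Fin n) ℝ) (hMH : M.IsHermitian)
    {μ : ℝ} (hμ : 0 < μ) (hlb : ∀ x : Fin n → ℝ, μ * (x ⬝ᵥ x) ≤ x ⬝ᵥ M *ᵥ x)
    (S : Finset (Fin n)) (y : Fin n → ℝ) :
    y ⬝ᵥ (inPlaceInv M S) *ᵥ y ≤ μ⁻¹ * ∑ j ∈ S, (y j) ^ 2 := by
  set B : Matrix {x // x ∈ S} {x // x ∈ S} ℝ :=
    M.submatrix (fun a : {x // x ∈ S} => (a : Fin n))
      (fun a : {x // x ∈ S} => (a : Fin n)) with hBdef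
  have hBlb : ∀ v : {x // x ∈ S} → ℝ, μ * (v ⬝ᵥ v) ≤ v ⬝ᵥ B *ᵥ v := by
    intro v
    set xh : Fin n → ℝ := fun j => if h : j ∈ S then v ⟨j, h⟩ else 0 with hxh
    have hx0 : ∀ j ∉ S, xh j = 0 := fun j hj => dif_neg hj
    have e1 : xh ⬝ᵥ xh = v ⬝ᵥ v := by
      unfold dotProduct
      rw [← Finset.sum_subset (Finset.subset_univ S)
        (fun j _ hj => by rw [hx0 j hj, zero_mul]),
        ← Finset.sum_coe_sort S (fun j => xh j * xh j)]
      exact Finset.sum_congr rfl fun a _ => by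
        simp only [hxh, dif_pos a.2]
    have e2 : xh ⬝ᵥ M *ᵥ xh = v ⬝ᵥ B *ᵥ v := by
      rw [quadform_eq_double, quadform_eq_double,
        double_sum_restrict S (fun i j => xh i * M i j * xh j)
          (fun i j hij => by rcases hij with h | h <;> simp [hx0 _ h])]
      exact Finset.sum_congr rfl fun a _ => Finset.sum_congr rfl fun b _ => by
        simp only [hxh, dif_pos a.2, dif_pos b.2, hBdef, Matrix.submatrix_apply]
    calc μ * (v ⬝ᵥ v) = μ * (xh ⬝ᵥ xh) := by rw [e1]
    _ ≤ xh ⬝ᵥ M *ᵥ xh := hlb xh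
    _ = v ⬝ᵥ B *ᵥ v := e2
  have hB : B.PosDef := by
    refine Matrix.PosDef.of_dotProduct_mulVec_pos (hMH.submatrix _) fun v hv => ?_
    have hvv : 0 < v ⬝ᵥ v :=
      lt_of_le_of_ne (Finset.sum_nonneg fun i _ => mul_self_nonneg _)
        (Ne.symm (fun h => hv (dotProduct_self_eq_zero.mp h)))
    have : star v = v := by funext i; simp
    rw [this]
    exact lt_of_lt_of_le (mul_pos hμ hvv) (hBlb v)
  set vS : {x // x ∈ S} → ℝ := fun a => y a with hvS
  have e3 : y ⬝ᵥ (inPlaceInv M S) *ᵥ y = vS ⬝ᵥ B⁻¹ *ᵥ vS := by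
    rw [quadform_eq_double, quadform_eq_double,
      double_sum_restrict S (fun i j => y i * (inPlaceInv M S) i j * y j)
        (fun i j hij => by
          rcases hij with h | h <;>
            simp [inPlaceInv, h, Matrix.of_apply] <;> intro h2 <;> simp [h])]
    refine Finset.sum_congr rfl fun a _ => Finset.sum_congr rfl fun b _ => ?_
    simp only [inPlaceInv, Matrix.of_apply, dif_pos a.2, dif_pos b.2, hvS, hBdef]
  have e4 : vS ⬝ᵥ vS = ∑ j ∈ S, (y j) ^ 2 := by
    rw [← Finset.sum_coe_sort S (fun j => (y j) ^ 2)]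
    unfold dotProduct
    exact Finset.sum_congr rfl fun a _ => by simp [hvS, sq]
  rw [e3, ← e4]
  exact inv_quadform_le B hB hμ hBlb vS

lemma window_count {n τ : ℕ} [NeZero n] (hτn : τ ≤ n) (g : Fin n → ℝ) :
    ∑ i : Fin n, ∑ j ∈ Finset.image (fun k : Fin τ => i + ((k : ℕ) : Fin n)) Finset.univ, g j
      = (τ : ℝ) * ∑ j, g j := by
  have hstep : ∀ i : Fin n,
      ∑ j ∈ Finset.image (fun k : Fin τ => i + ((k : ℕ) : Fin n)) Finset.univ, g j
        = ∑ k : Fin τ, g (i + ((k : ℕ) : Fin n)) := by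
    intro i
    rw [Finset.sum_image]
    intro k1 _ k2 _ h
    have h2 : (((k1 : ℕ) : Fin n) : Fin n) = ((k2 : ℕ) : Fin n) := add_left_cancel h
    have h3 : ((k1 : ℕ) : Fin n).val = ((k2 : ℕ) : Fin n).val := congrArg Fin.val h2
    rw [Fin.val_cast_of_lt (lt_of_lt_of_le k1.isLt hτn),
      Fin.val_cast_of_lt (lt_of_lt_of_le k2.isLt hτn)] at h3
    exact Fin.ext h3
  simp_rw [hstep]
  rw [Finset.sum_comm]
  have : ∀ k : Fin τ, ∑ i : Fin n, g (i + ((k : ℕ) : Fin n)) = ∑ j, g j := fun k =>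
    Equiv.sum_comp (Equiv.addRight (((k : ℕ) : Fin n))) g
  simp_rw [this, Finset.sum_const, Finset.card_univ, Fintype.card_fin, nsmul_eq_mul]

/-- For `M ≻ 0` and the `τ`-list sampling (uniform over the `n` cyclic windows
of length `τ`), `θ = λmax(M^{1/2} E[(M_Ŝ)⁻¹] M^{1/2}) ≤ (τ/n)·cond(M)`. -/
theorem stmt9 {n τ : ℕ} [NeZero n] (hτ : 0 < τ) (hτn : τ ≤ n)
    (M : Matrix (Fin n) (Fin n) ℝ) (hM : M.PosDef) (hMH : M.IsHermitian)
    (X : Matrix (Fin n) (Fin n) ℝ)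
    (hXdef : X = CFC.sqrt M *
      ((n : ℝ)⁻¹ • ∑ i : Fin n, inPlaceInv M
        (Finset.image (fun k : Fin τ => i + ((k : ℕ) : Fin n)) Finset.univ)) *
      CFC.sqrt M)
    (hX : X.IsHermitian) :
    (⨆ i, hX.eigenvalues i) ≤
      ((τ : ℝ) / n) * ((⨆ i, hMH.eigenvalues i) / (⨅ i, hMH.eigenvalues i)) := by
  have hnpos : 0 < n := NeZero.pos n
  have hnR : (0 : ℝ) < n := by exact_mod_cast hnpos
  haveI : Nonempty (Fin n) := ⟨⟨0, hnpos⟩⟩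
  set lmax := ⨆ i, hMH.eigenvalues i with hlmax
  set lmin := ⨅ i, hMH.eigenvalues i with hlmin
  have hbddA : BddAbove (Set.range hMH.eigenvalues) := Set.Finite.bddAbove (Set.finite_range _)
  have hbddB : BddBelow (Set.range hMH.eigenvalues) := Set.Finite.bddBelow (Set.finite_range _)
  have hminpos : 0 < lmin := by
    obtain ⟨i, hi⟩ := exists_eq_ciInf_of_finite (f := hMH.eigenvalues)
    rw [hlmin, ← hi]
    exact hM.eigenvalues_pos i
  have hmaxpos : 0 < lmax := by
    obtain ⟨i, hi⟩ := exists_eq_ciSup_of_finite (f := hMH.eigenvalues)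
    rw [hlmax, ← hi]
    exact hM.eigenvalues_pos i
  have hlb : ∀ x : Fin n → ℝ, lmin * (x ⬝ᵥ x) ≤ x ⬝ᵥ M *ᵥ x :=
    quadform_ge_of_eigen_ge hMH (fun i => ciInf_le hbddB i)
  have hub : ∀ x : Fin n → ℝ, x ⬝ᵥ M *ᵥ x ≤ lmax * (x ⬝ᵥ x) :=
    quadform_le_of_eigen_le hMH (fun i => le_ciSup hbddA i)
  set c : ℝ := ((τ : ℝ) / n) * (lmax / lmin) with hc
  -- key quadratic form bound
  have hkey : ∀ x : Fin n → ℝ, x ⬝ᵥ X *ᵥ x ≤ c * (x ⬝ᵥ x) := by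
    intro x
    set Q := CFC.sqrt M with hQ
    have hQH : Q.IsHermitian := (CFC.sqrt_nonneg M).posSemidef.1
    have hQsymm : Qᵀ = Q := by
      ext i j
      simpa using congrFun (congrFun hQH i) j
    set E := ((n : ℝ)⁻¹ • ∑ i : Fin n, inPlaceInv M
        (Finset.image (fun k : Fin τ => i + ((k : ℕ) : Fin n)) Finset.univ)) with hE
    set y := Q *ᵥ x with hy
    have h1 : x ⬝ᵥ X *ᵥ x = y ⬝ᵥ E *ᵥ y := by
      rw [hXdef, ← mulVec_mulVec, ← mulVec_mulVec, dotProduct_mulVec, ← mulVec_transpose,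
        hQsymm]
    have h3 : x ⬝ᵥ M *ᵥ x = y ⬝ᵥ y := by
      conv_lhs => rw [← CFC.sqrt_mul_sqrt_self M hM.posSemidef.nonneg, ← hQ, ← mulVec_mulVec,
        dotProduct_mulVec, ← mulVec_transpose, hQsymm]
    have h2 : y ⬝ᵥ E *ᵥ y ≤ (n : ℝ)⁻¹ * (lmin⁻¹ * ((τ : ℝ) * (y ⬝ᵥ y))) := by
      rw [hE, smul_mulVec, dotProduct_smul, smul_eq_mul]
      refine mul_le_mul_of_nonneg_left ?_ (inv_nonneg.mpr hnR.le)
      have hsum : (∑ i : Fin n, inPlaceInv M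
          (Finset.image (fun k : Fin τ => i + ((k : ℕ) : Fin n)) Finset.univ)) *ᵥ y
          = ∑ i : Fin n, (inPlaceInv M
          (Finset.image (fun k : Fin τ => i + ((k : ℕ) : Fin n)) Finset.univ)) *ᵥ y := by
        funext j
        simp only [Matrix.mulVec, dotProduct, Matrix.sum_apply, Finset.sum_apply, Finset.sum_mul]
        exact Finset.sum_comm
      have hdp : y ⬝ᵥ ((∑ i : Fin n, inPlaceInv M
          (Finset.image (fun k : Fin τ => i + ((k : ℕ) : Fin n)) Finset.univ)) *ᵥ y)
          = ∑ i : Fin n, y ⬝ᵥ ((inPlaceInv M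
          (Finset.image (fun k : Fin τ => i + ((k : ℕ) : Fin n)) Finset.univ)) *ᵥ y) := by
        rw [hsum]
        simp only [dotProduct, Finset.sum_apply, Finset.mul_sum]
        exact Finset.sum_comm
      rw [hdp]
      calc ∑ i : Fin n, y ⬝ᵥ (inPlaceInv M
              (Finset.image (fun k : Fin τ => i + ((k : ℕ) : Fin n)) Finset.univ)) *ᵥ y
          ≤ ∑ i : Fin n, lmin⁻¹ * ∑ j ∈
              Finset.image (fun k : Fin τ => i + ((k : ℕ) : Fin n)) Finset.univ, (y j) ^ 2 :=
            Finset.sum_le_sum fun i _ => window_bound M hMH hminpos hlb _ y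
        _ = lmin⁻¹ * ((τ : ℝ) * ∑ j, (y j) ^ 2) := by
            rw [← Finset.mul_sum, window_count hτn (fun j => (y j) ^ 2)]
        _ = lmin⁻¹ * ((τ : ℝ) * (y ⬝ᵥ y)) := by rw [dot_eq_sum_sq]
    have h4 : x ⬝ᵥ M *ᵥ x ≤ lmax * (x ⬝ᵥ x) := hub x
    calc x ⬝ᵥ X *ᵥ x = y ⬝ᵥ E *ᵥ y := h1
      _ ≤ (n : ℝ)⁻¹ * (lmin⁻¹ * ((τ : ℝ) * (y ⬝ᵥ y))) := h2
      _ = (n : ℝ)⁻¹ * (lmin⁻¹ * ((τ : ℝ) * (x ⬝ᵥ M *ᵥ x))) := by rw [← h3]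
      _ ≤ (n : ℝ)⁻¹ * (lmin⁻¹ * ((τ : ℝ) * (lmax * (x ⬝ᵥ x)))) := by
          refine mul_le_mul_of_nonneg_left (mul_le_mul_of_nonneg_left
            (mul_le_mul_of_nonneg_left h4 (Nat.cast_nonneg τ))
            (inv_nonneg.mpr hminpos.le)) (inv_nonneg.mpr hnR.le)
      _ = c * (x ⬝ᵥ x) := by rw [hc]; field_simp
  -- conclude via eigenvalues of X
  refine ciSup_le fun i => ?_
  have hval := hX.eigenvalues_eq i
  set v : Fin n → ℝ := ⇑(hX.eigenvectorBasis i) with hv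
  have hstar : star v = v := by funext j; simp
  have heig : hX.eigenvalues i = v ⬝ᵥ X *ᵥ v := by
    rw [hval]; simp [hstar]
  have hnorm : v ⬝ᵥ v = 1 := by
    have h1 : ‖hX.eigenvectorBasis i‖ = 1 := hX.eigenvectorBasis.orthonormal.1 i
    have h2 : v ⬝ᵥ v = @inner ℝ _ _ (hX.eigenvectorBasis i) (hX.eigenvectorBasis i) := by
      rw [PiLp.inner_apply]
      simp only [dotProduct, RCLike.inner_apply, conj_trivial]
      rfl
    rw [h2, real_inner_self_eq_norm_sq, h1, one_pow]
  calc hX.eigenvalues i = v ⬝ᵥ X *ᵥ v := heig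
    _ ≤ c * (v ⬝ᵥ v) := hkey v
    _ = c := by rw [hnorm, mul_one]
end
end

section
/- Let M be the n×n ρ-matrix with 0 < ρ < 1, and let Ŝ be τ-nice sampling (uniform over all subsets of [n] of size τ), with 2 ≤ τ ≤ n. Then E[(M_Ŝ)⁻¹] = (τ/n)·A(τ)·I + (τ(τ−1)/(n(n−1)))·B(τ)·(J − I), where A(τ) = ((τ−2)ρ+1)/((1−ρ)((τ−1)ρ+1)), B(τ) = −ρ/((1−ρ)((τ−1)ρ+1)), and J is the all-ones matrix. -/
open Matrix BigOperators Finset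

noncomputable section

lemma inv_rho_matrix {ι : Type*} [Fintype ι] [DecidableEq ι] {τ : ℕ}
    (hcard : Fintype.card ι = τ) (hτ : 1 ≤ τ) (ρ A B : ℝ) (hρ0 : 0 < ρ) (hρ1 : ρ < 1)
    (hA : A = (((τ : ℝ) - 2) * ρ + 1) / ((1 - ρ) * (((τ : ℝ) - 1) * ρ + 1)))
    (hB : B = -ρ / ((1 - ρ) * (((τ : ℝ) - 1) * ρ + 1))) :
    (Matrix.of fun i j : ι => if i = j then (1:ℝ) else ρ)⁻¹
      = Matrix.of fun i j : ι => if i = j then A else B := by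
  have hτ1 : (1:ℝ) ≤ (τ:ℝ) := by exact_mod_cast hτ
  have h1 : (0:ℝ) < 1 - ρ := by linarith
  have h2 : (0:ℝ) < ((τ:ℝ) - 1) * ρ + 1 := by nlinarith
  apply Matrix.inv_eq_right_inv
  ext i j
  simp only [Matrix.mul_apply, Matrix.of_apply, Matrix.one_apply]
  have key : ∀ k : ι, (if i = k then (1:ℝ) else ρ) * (if k = j then A else B)
      = ρ * (if k = j then A else B) + (if i = k then (1 - ρ) * (if k = j then A else B) else 0) := by
    intro k; split_ifs <;> ring
  rw [Finset.sum_congr rfl (fun k _ => key k), Finset.sum_add_distrib, ← Finset.mul_sum,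
    Finset.sum_ite_eq Finset.univ i (fun k => (1 - ρ) * (if k = j then A else B))]
  have hsum : ∑ k : ι, (if k = j then A else B) = A + ((τ:ℝ) - 1) * B := by
    have : ∀ k : ι, (if k = j then A else B) = B + (if k = j then A - B else 0) := by
      intro k; by_cases h : k = j <;> simp [h]
    rw [Finset.sum_congr rfl (fun k _ => this k), Finset.sum_add_distrib, Finset.sum_const,
      Finset.sum_ite_eq' Finset.univ j (fun _ => A - B)]
    simp [hcard]
    ring
  rw [hsum]
  by_cases h : i = j
  · simp only [h, if_pos rfl, Finset.mem_univ, if_true]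
    have hd : (1 - ρ) * (((τ:ℝ) - 1) * ρ + 1) ≠ 0 := by positivity
    rw [hA, hB, div_eq_mul_inv, div_eq_mul_inv]; linear_combination mul_inv_cancel₀ hd
  · simp only [if_neg h, Finset.mem_univ, if_true, if_neg (Ne.symm h)]
    rw [hA, hB]; field_simp; ring

lemma count_one {n τ : ℕ} (hτ : 1 ≤ τ) (i : Fin n) :
    ((Finset.univ.filter fun S : Finset (Fin n) => S.card = τ ∧ i ∈ S)).card
      = (n-1).choose (τ-1) := by
  have h1 : ((Finset.univ : Finset (Fin n)).erase i).card = n - 1 := by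
    rw [Finset.card_erase_of_mem (Finset.mem_univ i)]; simp
  rw [← h1, ← Finset.card_powersetCard (τ-1) ((Finset.univ : Finset (Fin n)).erase i)]
  apply Finset.card_bij' (fun S _ => S.erase i) (fun T _ => insert i T)
  · intro S hS
    simp only [Finset.mem_filter] at hS
    exact Finset.insert_erase hS.2.2
  · intro T hT
    rw [Finset.mem_powersetCard] at hT
    have hiT : i ∉ T := fun h => (Finset.mem_erase.mp (hT.1 h)).1 rfl
    exact Finset.erase_insert hiT
  · intro S hS
    simp only [Finset.mem_filter] at hS
    rw [Finset.mem_powersetCard]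
    constructor
    · intro x hx
      simp only [Finset.mem_erase] at hx ⊢
      exact ⟨hx.1, Finset.mem_univ x⟩
    · rw [Finset.card_erase_of_mem hS.2.2, hS.2.1]
  · intro T hT
    rw [Finset.mem_powersetCard] at hT
    have hiT : i ∉ T := fun h => (Finset.mem_erase.mp (hT.1 h)).1 rfl
    simp only [Finset.mem_filter, Finset.mem_univ, true_and]
    refine ⟨?_, Finset.mem_insert_self i T⟩
    rw [Finset.card_insert_of_notMem hiT, hT.2]
    omega

lemma count_two {n τ : ℕ} (hτ : 2 ≤ τ) {i j : Fin n} (hij : i ≠ j) :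
    ((Finset.univ.filter fun S : Finset (Fin n) => S.card = τ ∧ (i ∈ S ∧ j ∈ S))).card
      = (n-2).choose (τ-2) := by
  have hn2 : 2 ≤ n := by
    have : ({i, j} : Finset (Fin n)).card = 2 := Finset.card_pair hij
    calc 2 = ({i, j} : Finset (Fin n)).card := this.symm
    _ ≤ Fintype.card (Fin n) := by simpa using Finset.card_le_univ ({i,j} : Finset (Fin n))
    _ = n := Fintype.card_fin n
  have h1 : (((Finset.univ : Finset (Fin n)).erase i).erase j).card = n - 2 := by
    rw [Finset.card_erase_of_mem, Finset.card_erase_of_mem (Finset.mem_univ i)]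
    · simp; omega
    · exact Finset.mem_erase.mpr ⟨Ne.symm hij, Finset.mem_univ j⟩
  rw [← h1, ← Finset.card_powersetCard (τ-2) _]
  apply Finset.card_bij' (fun S _ => (S.erase i).erase j) (fun T _ => insert i (insert j T))
  · intro S hS
    simp only [Finset.mem_filter] at hS
    have hji : j ∈ S.erase i := Finset.mem_erase.mpr ⟨Ne.symm hij, hS.2.2.2⟩
    rw [Finset.insert_erase hji, Finset.insert_erase hS.2.2.1]
  · intro T hT
    rw [Finset.mem_powersetCard] at hT
    have hiT : i ∉ T := fun h => by
      have := hT.1 h; simp [Finset.mem_erase] at this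
    have hjT : j ∉ T := fun h => by
      have := hT.1 h; simp [Finset.mem_erase] at this
    have hij' : i ∉ insert j T := by simp [Finset.mem_insert, hiT, hij]
    rw [Finset.erase_insert hij', Finset.erase_insert hjT]
  · intro S hS
    simp only [Finset.mem_filter] at hS
    rw [Finset.mem_powersetCard]
    constructor
    · intro x hx
      simp only [Finset.mem_erase] at hx ⊢
      exact ⟨hx.1, hx.2.1, Finset.mem_univ x⟩
    · rw [Finset.card_erase_of_mem (Finset.mem_erase.mpr ⟨Ne.symm hij, hS.2.2.2⟩),
        Finset.card_erase_of_mem hS.2.2.1, hS.2.1]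
      omega
  · intro T hT
    rw [Finset.mem_powersetCard] at hT
    have hiT : i ∉ T := fun h => by
      have := hT.1 h; simp [Finset.mem_erase] at this
    have hjT : j ∉ T := fun h => by
      have := hT.1 h; simp [Finset.mem_erase] at this
    simp only [Finset.mem_filter, Finset.mem_univ, true_and]
    refine ⟨?_, Finset.mem_insert_self i _, Finset.mem_insert_of_mem (Finset.mem_insert_self j T)⟩
    rw [Finset.card_insert_of_notMem, Finset.card_insert_of_notMem hjT, hT.2]
    · omega
    · simp [Finset.mem_insert, hij, hiT]


/-- For the `ρ`-matrix and `τ`-nice sampling (uniform over `τ`-subsets),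
`E[(M_Ŝ)⁻¹] = (τ/n)A(τ)·I + (τ(τ-1)/(n(n-1)))B(τ)·(J - I)`. -/
theorem stmt13 {n τ : ℕ} (hτ : 2 ≤ τ) (hτn : τ ≤ n)
    (ρ : ℝ) (hρ0 : 0 < ρ) (hρ1 : ρ < 1)
    (M : Matrix (Fin n) (Fin n) ℝ)
    (hMdef : M = Matrix.of fun i j => if i = j then (1 : ℝ) else ρ)
    (A B : ℝ)
    (hA : A = (((τ : ℝ) - 2) * ρ + 1) / ((1 - ρ) * (((τ : ℝ) - 1) * ρ + 1)))
    (hB : B = -ρ / ((1 - ρ) * (((τ : ℝ) - 1) * ρ + 1))) :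
    ((n.choose τ : ℝ))⁻¹ •
        ∑ S ∈ Finset.univ.filter (fun S : Finset (Fin n) => S.card = τ), inPlaceInv M S =
      (((τ : ℝ) / n) * A) • (1 : Matrix (Fin n) (Fin n) ℝ) +
        (((τ : ℝ) * ((τ : ℝ) - 1) / ((n : ℝ) * ((n : ℝ) - 1))) * B) •
          ((Matrix.of fun _ _ => (1 : ℝ)) - 1) := by
  have hn2 : 2 ≤ n := le_trans hτ hτn
  have hn0 : (n : ℝ) ≠ 0 := by
    have : (0:ℝ) < n := by exact_mod_cast (by omega : 0 < n)
    linarith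
  have hn1 : (n : ℝ) - 1 ≠ 0 := by
    have : (2:ℝ) ≤ n := by exact_mod_cast hn2
    linarith
  have hC : ((n.choose τ : ℝ)) ≠ 0 := Nat.cast_ne_zero.mpr (Nat.choose_pos hτn).ne'
  -- Nat binomial identities
  have id1 : n * (n-1).choose (τ-1) = n.choose τ * τ := by
    have h := Nat.add_one_mul_choose_eq (n-1) (τ-1)
    rw [Nat.sub_add_cancel (by omega : 1 ≤ n), Nat.sub_add_cancel (by omega : 1 ≤ τ)] at h
    exact h
  have id2 : (n-1) * (n-2).choose (τ-2) = (n-1).choose (τ-1) * (τ-1) := by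
    have h := Nat.add_one_mul_choose_eq (n-2) (τ-2)
    rw [(by omega : n - 2 + 1 = n - 1), (by omega : τ - 2 + 1 = τ - 1)] at h
    exact h
  have id3 : n * (n-1) * (n-2).choose (τ-2) = n.choose τ * (τ * (τ-1)) := by
    calc n * (n-1) * (n-2).choose (τ-2) = n * ((n-1) * (n-2).choose (τ-2)) := by ring
    _ = n * ((n-1).choose (τ-1) * (τ-1)) := by rw [id2]
    _ = (n * (n-1).choose (τ-1)) * (τ-1) := by ring
    _ = (n.choose τ * τ) * (τ-1) := by rw [id1]
    _ = n.choose τ * (τ * (τ-1)) := by ring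
  have hcast1 : (n:ℝ) * ((n-1).choose (τ-1) : ℝ) = (n.choose τ : ℝ) * τ := by
    exact_mod_cast congrArg (Nat.cast : ℕ → ℝ) id1
  have hcast2 : (n:ℝ) * ((n:ℝ) - 1) * ((n-2).choose (τ-2) : ℝ)
      = (n.choose τ : ℝ) * ((τ:ℝ) * ((τ:ℝ) - 1)) := by
    have h := congrArg (Nat.cast : ℕ → ℝ) id3
    push_cast [Nat.cast_sub (show 1 ≤ n by omega), Nat.cast_sub (show 1 ≤ τ by omega)] at h
    linear_combination h
  have keyd : ((n.choose τ : ℝ))⁻¹ * ((n-1).choose (τ-1) : ℝ) = (τ:ℝ) / n := by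
    field_simp
    linear_combination hcast1
  have keyo : ((n.choose τ : ℝ))⁻¹ * ((n-2).choose (τ-2) : ℝ)
      = (τ:ℝ) * ((τ:ℝ) - 1) / ((n:ℝ) * ((n:ℝ) - 1)) := by
    field_simp
    linear_combination hcast2
  -- rewrite each summand
  have hstep : ∀ S ∈ Finset.univ.filter (fun S : Finset (Fin n) => S.card = τ),
      inPlaceInv M S
        = Matrix.of fun i j => if i ∈ S ∧ j ∈ S then (if i = j then A else B) else 0 := by
    intro S hS
    simp only [Finset.mem_filter] at hS
    ext i j
    simp only [inPlaceInv, Matrix.of_apply]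
    by_cases hi : i ∈ S
    · by_cases hj : j ∈ S
      · rw [dif_pos hi, dif_pos hj, if_pos ⟨hi, hj⟩]
        have hcard : Fintype.card {x // x ∈ S} = τ := by
          rw [Fintype.card_coe, hS.2]
        have hsub : M.submatrix (fun a : {x // x ∈ S} => (a : Fin n))
            (fun a : {x // x ∈ S} => (a : Fin n))
            = Matrix.of fun a b : {x // x ∈ S} => if a = b then (1:ℝ) else ρ := by
          ext a b
          simp [hMdef, Matrix.submatrix_apply]
        rw [hsub, inv_rho_matrix hcard (by omega) ρ A B hρ0 hρ1 hA hB]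
        simp
      · simp [hi, hj]
    · simp [hi]
  rw [Finset.sum_congr rfl hstep]
  ext i j
  simp only [Matrix.smul_apply, Matrix.sum_apply, Matrix.add_apply, Matrix.sub_apply,
    Matrix.of_apply, Matrix.one_apply, smul_eq_mul]
  by_cases hij : i = j
  · subst hij
    simp only [and_self, eq_self_iff_true, if_true]
    have : ∑ S ∈ Finset.univ.filter (fun S : Finset (Fin n) => S.card = τ),
        (if i ∈ S then A else 0)
        = (((n-1).choose (τ-1) : ℝ)) * A := by
      rw [← Finset.sum_filter, Finset.filter_filter, Finset.sum_const]
      rw [count_one (by omega : 1 ≤ τ) i]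
      simp [nsmul_eq_mul]
    rw [this]
    rw [← mul_assoc, keyd]
    ring
  · simp only [if_neg hij]
    have : ∑ S ∈ Finset.univ.filter (fun S : Finset (Fin n) => S.card = τ),
        (if i ∈ S ∧ j ∈ S then B else 0)
        = (((n-2).choose (τ-2) : ℝ)) * B := by
      rw [← Finset.sum_filter, Finset.filter_filter, Finset.sum_const]
      rw [count_two hτ hij]
      simp [nsmul_eq_mul]
    rw [this]
    rw [← mul_assoc, keyo]
    ring
end
end

section
/- Let M be the n×n ρ-matrix with 0 < ρ < 1 and Ŝ be τ-nice sampling with 2 ≤ τ ≤ n. Then θ := λ_max(M^{1/2}E[(M_Ŝ)⁻¹]M^{1/2}) = (nρ−ρ+1)·(n((τ−1)B(τ))/((n−1)A(τ)) − ((τ−1)B(τ))/((n−1)A(τ)) + 1)·(τA(τ)/n), with A(τ) = ((τ−2)ρ+1)/((1−ρ)((τ−1)ρ+1)) and B(τ) = −ρ/((1−ρ)((τ−1)ρ+1)). -/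
open Matrix BigOperators Finset

noncomputable section

/-- The square root of a positive semidefinite matrix, as `Matrix.PosSemidef.sqrt` was defined
in the older Mathlib. -/
def posSemidefSqrt {n : ℕ} {A : Matrix (Fin n) (Fin n) ℝ} (hA : A.PosSemidef) :
    Matrix (Fin n) (Fin n) ℝ :=
  (hA.1.eigenvectorUnitary : Matrix (Fin n) (Fin n) ℝ) *
    diagonal ((↑) ∘ (Real.sqrt ·) ∘ hA.1.eigenvalues) *
    (star hA.1.eigenvectorUnitary : Matrix (Fin n) (Fin n) ℝ)

lemma count_supersets {α : Type*} [DecidableEq α] [Fintype α] (T : Finset α) {τ : ℕ}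
    (hT : T.card ≤ τ) :
    ((Finset.univ.filter (fun S : Finset α => S.card = τ ∧ T ⊆ S)).card)
      = (Fintype.card α - T.card).choose (τ - T.card) := by
  rw [← Finset.card_compl T, ← Finset.card_powersetCard (τ - T.card) Tᶜ]
  apply Finset.card_nbij' (i := fun S => S \ T) (j := fun U => U ∪ T)
  · intro S hS
    simp only [Finset.mem_coe, Finset.mem_filter, Finset.mem_univ, true_and] at hS
    simp only [Finset.mem_coe, Finset.mem_powersetCard]
    refine ⟨fun x hx => ?_, ?_⟩
    · simp only [Finset.mem_sdiff] at hx
      simpa using hx.2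
    · rw [Finset.card_sdiff_of_subset hS.2, hS.1]
  · intro U hU
    simp only [Finset.mem_coe, Finset.mem_powersetCard] at hU
    have hd : Disjoint U T := Finset.disjoint_left.2 fun x hx => by
      have := hU.1 hx; simpa using this
    simp only [Finset.mem_coe, Finset.mem_filter, Finset.mem_univ, true_and]
    refine ⟨?_, Finset.subset_union_right⟩
    rw [Finset.card_union_of_disjoint hd, hU.2]
    omega
  · intro S hS
    simp only [Finset.mem_coe, Finset.mem_filter, Finset.mem_univ, true_and] at hS
    exact Finset.sdiff_union_of_subset hS.2
  · intro U hU
    simp only [Finset.mem_coe, Finset.mem_powersetCard] at hU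
    have hd : Disjoint U T := Finset.disjoint_left.2 fun x hx => by
      have := hU.1 hx; simpa using this
    beta_reduce
    rw [Finset.union_sdiff_right, Finset.sdiff_eq_self_of_disjoint hd]

lemma rho_matrix_inv {ι : Type*} [Fintype ι] [DecidableEq ι] {τ : ℕ} {ρ A B : ℝ}
    (hρ0 : 0 < ρ) (hρ1 : ρ < 1) (hcard : Fintype.card ι = τ) (hτ : 1 ≤ τ)
    (hA : A = (((τ : ℝ) - 2) * ρ + 1) / ((1 - ρ) * (((τ : ℝ) - 1) * ρ + 1)))
    (hB : B = -ρ / ((1 - ρ) * (((τ : ℝ) - 1) * ρ + 1))) :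
    (Matrix.of fun a b : ι => if a = b then (1:ℝ) else ρ)⁻¹
      = Matrix.of fun a b : ι => if a = b then A else B := by
  have hτR : (1:ℝ) ≤ (τ:ℝ) := by exact_mod_cast hτ
  have hd1 : (0:ℝ) < 1 - ρ := by linarith
  have hd2 : (0:ℝ) < ((τ:ℝ) - 1) * ρ + 1 := by nlinarith
  have hD : ((1 - ρ) * (((τ : ℝ) - 1) * ρ + 1)) ≠ 0 := by positivity
  apply Matrix.inv_eq_right_inv
  ext a b
  simp only [Matrix.mul_apply, Matrix.of_apply, Matrix.one_apply]
  have step : ∀ c : ι, (if a = c then (1:ℝ) else ρ) * (if c = b then A else B)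
      = ρ * (if c = b then A else B)
        + (if c = a then (1 - ρ) * (if a = b then A else B) else 0) := by
    intro c
    by_cases h1 : c = a
    · subst h1
      simp only [if_pos rfl, if_true]
      ring
    · have h1' : a ≠ c := fun h => h1 h.symm
      simp only [if_neg h1, if_neg h1', add_zero]
  rw [Finset.sum_congr rfl fun c _ => step c, Finset.sum_add_distrib, ← Finset.mul_sum,
    Finset.sum_ite_eq' Finset.univ a]
  have sum2 : ∑ c : ι, (if c = b then A else B) = A + ((τ:ℝ) - 1) * B := by
    have : ∀ c : ι, (if c = b then A else B) = B + (if c = b then A - B else 0) := by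
      intro c; by_cases h : c = b <;> simp [h]
    rw [Finset.sum_congr rfl fun c _ => this c, Finset.sum_add_distrib,
      Finset.sum_ite_eq' Finset.univ b, Finset.sum_const]
    simp only [Finset.mem_univ, if_true, Finset.card_univ, hcard, nsmul_eq_mul]
    ring
  rw [sum2]
  simp only [Finset.mem_univ, if_true]
  by_cases hab : a = b
  · simp only [hab, if_true]
    rw [hA, hB]
    have hDD := mul_inv_cancel₀ hD
    simp only [div_eq_mul_inv]
    linear_combination hDD
  · simp only [hab, if_false]
    rw [hA, hB]
    field_simp
    ring

set_option maxHeartbeats 2000000 in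
/-- For the `ρ`-matrix with `τ`-nice sampling,
`θ = λmax(M^{1/2} E[(M_Ŝ)⁻¹] M^{1/2})
   = (nρ-ρ+1)(n(τ-1)B/((n-1)A) - (τ-1)B/((n-1)A) + 1)·τA/n`. -/
theorem stmt15 {n τ : ℕ} (hτ : 2 ≤ τ) (hτn : τ ≤ n)
    (ρ : ℝ) (hρ0 : 0 < ρ) (hρ1 : ρ < 1)
    (M : Matrix (Fin n) (Fin n) ℝ)
    (hMdef : M = Matrix.of fun i j => if i = j then (1 : ℝ) else ρ)
    (hM : M.PosDef)
    (A B : ℝ)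
    (hA : A = (((τ : ℝ) - 2) * ρ + 1) / ((1 - ρ) * (((τ : ℝ) - 1) * ρ + 1)))
    (hB : B = -ρ / ((1 - ρ) * (((τ : ℝ) - 1) * ρ + 1)))
    (X : Matrix (Fin n) (Fin n) ℝ)
    (hXdef : X = posSemidefSqrt hM.posSemidef *
      (((n.choose τ : ℝ))⁻¹ •
        ∑ S ∈ Finset.univ.filter (fun S : Finset (Fin n) => S.card = τ), inPlaceInv M S) *
      posSemidefSqrt hM.posSemidef)
    (hX : X.IsHermitian) :
    (⨆ i, hX.eigenvalues i) =
      ((n : ℝ) * ρ - ρ + 1) *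
        ((n : ℝ) * (((τ : ℝ) - 1) * B) / (((n : ℝ) - 1) * A) -
          ((τ : ℝ) - 1) * B / (((n : ℝ) - 1) * A) + 1) * ((τ : ℝ) * A / n) := by
  classical
  have hn2 : 2 ≤ n := le_trans hτ hτn
  have hnR : (2:ℝ) ≤ (n:ℝ) := by exact_mod_cast hn2
  have hτR : (2:ℝ) ≤ (τ:ℝ) := by exact_mod_cast hτ
  have hτnR : (τ:ℝ) ≤ (n:ℝ) := by exact_mod_cast hτn
  have hn0 : (0:ℝ) < (n:ℝ) := by linarith
  have hn0' : ((n:ℝ)) ≠ 0 := ne_of_gt hn0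
  -- matrices
  set K : Matrix (Fin n) (Fin n) ℝ := Matrix.of fun _ _ => (1:ℝ) with hK
  set P : Matrix (Fin n) (Fin n) ℝ := ((n:ℝ))⁻¹ • K with hP
  set Q : Matrix (Fin n) (Fin n) ℝ := 1 - P with hQ
  clear_value K P Q
  have hPapp : ∀ i j, P i j = ((n:ℝ))⁻¹ := by intro i j; simp [hP, hK]
  have hQapp : ∀ i j, Q i j = (if i = j then (1:ℝ) else 0) - ((n:ℝ))⁻¹ := by
    intro i j; simp [hQ, hPapp, Matrix.sub_apply, Matrix.one_apply]
  have hPP : P * P = P := by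
    ext i j
    simp only [Matrix.mul_apply, hPapp, Finset.sum_const, Finset.card_univ, Fintype.card_fin,
      nsmul_eq_mul]
    field_simp
  have hPQ : P * Q = 0 := by
    rw [hQ, Matrix.mul_sub, Matrix.mul_one, hPP, sub_self]
  have hQP : Q * P = 0 := by
    rw [hQ, Matrix.sub_mul, Matrix.one_mul, hPP, sub_self]
  have hQQ : Q * Q = Q := by
    rw [hQ, Matrix.sub_mul, Matrix.one_mul, Matrix.mul_sub, Matrix.mul_one, hPP]
    abel
  have hmul : ∀ a b c d : ℝ, (a • P + b • Q) * (c • P + d • Q)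
      = (a*c) • P + (b*d) • Q := by
    intro a b c d
    simp only [Matrix.add_mul, Matrix.mul_add, Matrix.smul_mul, Matrix.mul_smul,
      hPP, hPQ, hQP, hQQ, smul_zero, add_zero, zero_add, smul_smul]
    module
  -- square root of M
  set s₁ : ℝ := Real.sqrt (1 + ((n:ℝ) - 1) * ρ) with hs₁
  set s₂ : ℝ := Real.sqrt (1 - ρ) with hs₂
  clear_value s₁ s₂
  have hs₁sq : s₁ ^ 2 = 1 + ((n:ℝ) - 1) * ρ := by rw [hs₁]; exact Real.sq_sqrt (by nlinarith)
  have hs₂sq : s₂ ^ 2 = 1 - ρ := by rw [hs₂]; exact Real.sq_sqrt (by linarith)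
  set N : Matrix (Fin n) (Fin n) ℝ := s₁ • P + s₂ • Q with hN
  clear_value N
  have hMPQ : M = (1 + ((n:ℝ) - 1) * ρ) • P + (1 - ρ) • Q := by
    ext i j
    simp only [hMdef, Matrix.of_apply, Matrix.add_apply, Matrix.smul_apply, hPapp, hQapp,
      smul_eq_mul]
    by_cases h : i = j <;> simp [h] <;> field_simp <;> ring
  have hNsq : N * N = M := by
    rw [hN, hmul, hMPQ, ← hs₁sq, ← hs₂sq]; ring_nf
  have hNpsd : N.PosSemidef := by
    rw [Matrix.posSemidef_iff_dotProduct_mulVec]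
    constructor
    · show Nᴴ = N
      ext i j
      simp only [Matrix.conjTranspose_apply, hN, Matrix.add_apply, Matrix.smul_apply, hPapp,
        hQapp, smul_eq_mul, star_trivial]
      by_cases h : i = j
      · rw [h]
      · rw [if_neg h, if_neg (fun hh => h hh.symm)]
    · intro x
      have hPv : P *ᵥ x = fun _ => ((n:ℝ))⁻¹ * ∑ j, x j := by
        ext i; simp [Matrix.mulVec, dotProduct, hPapp, Finset.mul_sum]
      have hPdot : x ⬝ᵥ (P *ᵥ x) = ((n:ℝ))⁻¹ * (∑ j, x j)^2 := by
        rw [hPv]; simp only [dotProduct, ← Finset.sum_mul]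
        ring
      have hQdot : x ⬝ᵥ (Q *ᵥ x) = (∑ j, x j ^ 2) - ((n:ℝ))⁻¹ * (∑ j, x j)^2 := by
        rw [hQ, Matrix.sub_mulVec, Matrix.one_mulVec, dotProduct_sub, hPdot]
        simp [dotProduct, sq]
      have hkey : 0 ≤ x ⬝ᵥ (Q *ᵥ x) := by
        rw [hQdot, sub_nonneg]
        have h := sq_sum_le_card_mul_sum_sq (s := Finset.univ) (f := x)
        rw [Finset.card_univ, Fintype.card_fin] at h
        rw [inv_mul_le_iff₀ hn0]
        exact_mod_cast h
      have hkey2 : 0 ≤ x ⬝ᵥ (P *ᵥ x) := by rw [hPdot]; positivity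
      have hsn1 : 0 ≤ s₁ := by rw [hs₁]; exact Real.sqrt_nonneg _
      have hsn2 : 0 ≤ s₂ := by rw [hs₂]; exact Real.sqrt_nonneg _
      rw [star_trivial, hN, Matrix.add_mulVec, Matrix.smul_mulVec,
        Matrix.smul_mulVec, dotProduct_add, dotProduct_smul, dotProduct_smul,
        smul_eq_mul, smul_eq_mul]
      exact add_nonneg (mul_nonneg hsn1 hkey2) (mul_nonneg hsn2 hkey)
  have hsqrtN : posSemidefSqrt hM.posSemidef = N := by
    have h1 : posSemidefSqrt hM.posSemidef = cfc Real.sqrt M := by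
      rw [hM.posSemidef.1.cfc_eq]; rfl
    have hNsa : IsSelfAdjoint N := hNpsd.1
    have hspecN : ∀ x ∈ spectrum ℝ N, 0 ≤ x := by
      intro x hx
      rw [hNpsd.1.spectrum_real_eq_range_eigenvalues] at hx
      obtain ⟨i, rfl⟩ := hx
      exact hNpsd.eigenvalues_nonneg i
    have h2 : N * N = cfc (fun x : ℝ => x ^ 2) N := by
      rw [cfc_pow_id (ha := hNsa), sq]
    rw [h1, ← hNsq, h2, ← cfc_comp Real.sqrt (fun x : ℝ => x ^ 2) N]
    rw [cfc_congr (f := Real.sqrt ∘ fun x : ℝ => x ^ 2) (g := id)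
      (fun x hx => Real.sqrt_sq (hspecN x hx)), cfc_id ℝ N]
  -- expected inverse
  set cτ : ℝ := (n.choose τ : ℝ) with hcτdef
  set c1 : ℝ := ((n-1).choose (τ-1) : ℝ) with hc1def
  set c2 : ℝ := ((n-2).choose (τ-2) : ℝ) with hc2def
  have hcτ0 : cτ ≠ 0 := by
    have := Nat.choose_pos hτn; positivity
  set α : ℝ := c1 / cτ * A with hα
  set β : ℝ := c2 / cτ * B with hβ
  set e₁ : ℝ := α + ((n:ℝ) - 1) * β with he₁
  set e₂ : ℝ := α - β with he₂
  have hsum : ∑ S ∈ Finset.univ.filter (fun S : Finset (Fin n) => S.card = τ), inPlaceInv M S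
      = Matrix.of fun i j => if i = j then c1 * A else c2 * B := by
    have hterm : ∀ S : Finset (Fin n), S.card = τ → ∀ i j,
        inPlaceInv M S i j = if i ∈ S ∧ j ∈ S then (if i = j then A else B) else 0 := by
      intro S hS i j
      by_cases hi : i ∈ S
      · by_cases hj : j ∈ S
        · have hsub : (M.submatrix (fun a : {x // x ∈ S} => (a : Fin n))
              (fun a : {x // x ∈ S} => (a : Fin n)))
              = Matrix.of fun a b : {x // x ∈ S} => if a = b then (1:ℝ) else ρ := by
            ext a b
            simp [hMdef, Matrix.submatrix_apply, Subtype.coe_inj]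
          simp only [inPlaceInv, Matrix.of_apply, dif_pos hi, dif_pos hj, hsub]
          rw [rho_matrix_inv hρ0 hρ1 (by rw [Fintype.card_coe, hS]) (by omega) hA hB]
          simp [hi, hj, Subtype.mk.injEq]
        · simp [inPlaceInv, hi, hj]
      · simp [inPlaceInv, hi]
    ext i j
    rw [Matrix.sum_apply]
    rw [Finset.sum_congr rfl (fun S hS => hterm S (Finset.mem_filter.mp hS).2 i j),
      Finset.sum_ite, Finset.sum_const, Finset.sum_const_zero, add_zero, Finset.filter_filter]
    by_cases hij : i = j
    · subst hij
      have heq : (Finset.univ.filter (fun S : Finset (Fin n) => S.card = τ ∧ (i ∈ S ∧ i ∈ S)))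
          = Finset.univ.filter (fun S => S.card = τ ∧ ({i} : Finset (Fin n)) ⊆ S) := by
        apply Finset.filter_congr; intro S _; simp [Finset.singleton_subset_iff]
      rw [heq, count_supersets _ (by simp; omega)]
      simp [hc1def]
    · have heq : (Finset.univ.filter (fun S : Finset (Fin n) => S.card = τ ∧ (i ∈ S ∧ j ∈ S)))
          = Finset.univ.filter (fun S => S.card = τ ∧ ({i, j} : Finset (Fin n)) ⊆ S) := by
        apply Finset.filter_congr; intro S _
        simp [Finset.insert_subset_iff, Finset.singleton_subset_iff]
      have hcard2 : ({i, j} : Finset (Fin n)).card = 2 := Finset.card_pair hij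
      rw [heq, count_supersets _ (by rw [hcard2]; exact hτ)]
      simp [hcard2, hij, hc2def]
  have hE : ((n.choose τ : ℝ))⁻¹ •
      ∑ S ∈ Finset.univ.filter (fun S : Finset (Fin n) => S.card = τ), inPlaceInv M S
      = e₁ • P + e₂ • Q := by
    rw [hsum]
    ext i j
    simp only [Matrix.smul_apply, Matrix.of_apply, Matrix.add_apply, hPapp, hQapp, smul_eq_mul,
      he₁, he₂, hα, hβ, ← hcτdef]
    by_cases h : i = j <;> simp only [h, if_true, if_false] <;> field_simp <;> ring
  set θ₁ : ℝ := (1 + ((n:ℝ) - 1) * ρ) * e₁ with hθ₁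
  set θ₂ : ℝ := (1 - ρ) * e₂ with hθ₂
  have hXeq : X = θ₁ • P + θ₂ • Q := by
    rw [hXdef, hsqrtN, hE, hN, hmul, hmul, hθ₁, hθ₂, ← hs₁sq, ← hs₂sq]; ring_nf
  -- basic positivity facts
  have hd2 : (0:ℝ) < ((τ:ℝ) - 1) * ρ + 1 := by nlinarith
  have hApos : 0 < A := by
    rw [hA]
    apply div_pos
    · nlinarith
    · nlinarith
  have hAne : A ≠ 0 := ne_of_gt hApos
  have hn1pos : (0:ℝ) < (n:ℝ) - 1 := by linarith
  have hn1ne : ((n:ℝ) - 1) ≠ 0 := ne_of_gt hn1pos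
  -- choose identities
  have hnat1 : n * (n-1).choose (τ-1) = τ * n.choose τ := by
    have h := Nat.add_one_mul_choose_eq (n-1) (τ-1)
    have h1 : n - 1 + 1 = n := by omega
    have h2 : τ - 1 + 1 = τ := by omega
    simp only [Nat.succ_eq_add_one, h1, h2] at h
    rw [h, Nat.mul_comm]
  have hnat2 : (n-1) * (n-2).choose (τ-2) = (τ-1) * (n-1).choose (τ-1) := by
    have h := Nat.add_one_mul_choose_eq (n-2) (τ-2)
    have h1 : n - 2 + 1 = n - 1 := by omega
    have h2 : τ - 2 + 1 = τ - 1 := by omega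
    simp only [Nat.succ_eq_add_one, h1, h2] at h
    rw [h, Nat.mul_comm]
  have hcastn : ((n - 1 : ℕ) : ℝ) = (n:ℝ) - 1 := by
    rw [Nat.cast_sub (by omega)]; norm_num
  have hcastτ : ((τ - 1 : ℕ) : ℝ) = (τ:ℝ) - 1 := by
    rw [Nat.cast_sub (by omega)]; norm_num
  have hc1n : (n:ℝ) * c1 = (τ:ℝ) * cτ := by
    rw [hc1def, hcτdef]; exact_mod_cast congrArg (Nat.cast : ℕ → ℝ) hnat1
  have hc2n : ((n:ℝ) - 1) * c2 = ((τ:ℝ) - 1) * c1 := by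
    rw [hc2def, hc1def, ← hcastn, ← hcastτ]
    exact_mod_cast congrArg (Nat.cast : ℕ → ℝ) hnat2
  have hc1v : c1 = (τ:ℝ) * cτ / (n:ℝ) := by
    rw [eq_div_iff hn0']; linear_combination hc1n
  have hc2v : c2 = (τ:ℝ) * ((τ:ℝ) - 1) * cτ / ((n:ℝ) * ((n:ℝ) - 1)) := by
    rw [eq_div_iff (mul_ne_zero hn0' hn1ne)]
    linear_combination (n:ℝ) * hc2n + ((τ:ℝ) - 1) * hc1n
  have hρ1ne : (1:ℝ) - ρ ≠ 0 := by linarith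
  have hd2ne : ((τ:ℝ) - 1) * ρ + 1 ≠ 0 := ne_of_gt hd2
  have hθ2le : θ₂ ≤ θ₁ := by
    rw [← sub_nonneg]
    have hkey : θ₁ - θ₂ = (τ:ℝ) * ρ *
        ((((n:ℝ)-1)^2 - ((τ:ℝ)-2)*((n:ℝ)-1) - ((τ:ℝ)-1))) /
        ((n:ℝ) * ((n:ℝ)-1) * (((τ:ℝ)-1)*ρ + 1)) := by
      rw [hθ₁, hθ₂, he₁, he₂, hα, hβ, hc1v, hc2v, hA, hB]
      field_simp
      ring
    rw [hkey]
    apply div_nonneg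
    · have hbr : 0 ≤ (((n:ℝ)-1)^2 - ((τ:ℝ)-2)*((n:ℝ)-1) - ((τ:ℝ)-1)) := by nlinarith
      have : (0:ℝ) ≤ (τ:ℝ) := by linarith
      positivity
    · positivity
  -- eigenvalue identification
  have hPQsum : P + Q = 1 := by rw [hQ]; abel
  haveI hne : Nonempty (Fin n) := ⟨⟨0, by omega⟩⟩
  set u : Fin n → ℝ := fun _ => 1 with hu
  have hu0 : u ≠ 0 := by
    intro h
    have := congrFun h ⟨0, by omega⟩
    simp [hu] at this
  have hPu : P *ᵥ u = u := by
    ext i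
    simp only [Matrix.mulVec, dotProduct, hPapp, hu, mul_one, Finset.sum_const,
      Finset.card_univ, Fintype.card_fin, nsmul_eq_mul]
    exact mul_inv_cancel₀ hn0'
  have hQu : Q *ᵥ u = 0 := by
    rw [hQ, Matrix.sub_mulVec, Matrix.one_mulVec, hPu, sub_self]
  have hXu : X *ᵥ u = θ₁ • u := by
    rw [hXeq, Matrix.add_mulVec, Matrix.smul_mulVec, Matrix.smul_mulVec, hPu, hQu,
      smul_zero, add_zero]
  have hspec : ∀ μ : ℝ, μ ∈ spectrum ℝ X ↔ ∃ v, v ≠ 0 ∧ X *ᵥ v = μ • v := by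
    intro μ
    rw [spectrum.mem_iff, Algebra.algebraMap_eq_smul_one, Matrix.isUnit_iff_isUnit_det,
      isUnit_iff_ne_zero, not_not, ← Matrix.exists_mulVec_eq_zero_iff]
    constructor
    · rintro ⟨v, hv, hveq⟩
      refine ⟨v, hv, ?_⟩
      rw [Matrix.sub_mulVec, Matrix.smul_mulVec, Matrix.one_mulVec, sub_eq_zero] at hveq
      exact hveq.symm
    · rintro ⟨v, hv, hveq⟩
      exact ⟨v, hv, by
        rw [Matrix.sub_mulVec, Matrix.smul_mulVec, Matrix.one_mulVec, hveq, sub_self]⟩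
  have hθ₁mem : ∃ i, hX.eigenvalues i = θ₁ := by
    have hmem : θ₁ ∈ spectrum ℝ X := (hspec θ₁).2 ⟨u, hu0, hXu⟩
    rw [hX.spectrum_real_eq_range_eigenvalues] at hmem
    exact hmem
  have hPX : P * X = θ₁ • P := by
    rw [hXeq, Matrix.mul_add, Matrix.mul_smul, Matrix.mul_smul, hPP, hPQ, smul_zero, add_zero]
  have hQX : Q * X = θ₂ • Q := by
    rw [hXeq, Matrix.mul_add, Matrix.mul_smul, Matrix.mul_smul, hQP, hQQ, smul_zero, zero_add]
  have hub : ∀ i, hX.eigenvalues i ≤ θ₁ := by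
    intro i
    obtain ⟨v, hv0, hveq⟩ := (hspec _).1 (hX.eigenvalues_mem_spectrum_real i)
    set μ := hX.eigenvalues i with hμ
    have h1 : (μ - θ₁) • (P *ᵥ v) = 0 := by
      have e1 : P *ᵥ (X *ᵥ v) = θ₁ • (P *ᵥ v) := by
        rw [Matrix.mulVec_mulVec, hPX, Matrix.smul_mulVec]
      have e2 : P *ᵥ (X *ᵥ v) = μ • (P *ᵥ v) := by rw [hveq, Matrix.mulVec_smul]
      rw [sub_smul, ← e1, ← e2, sub_self]
    have h2 : (μ - θ₂) • (Q *ᵥ v) = 0 := by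
      have e1 : Q *ᵥ (X *ᵥ v) = θ₂ • (Q *ᵥ v) := by
        rw [Matrix.mulVec_mulVec, hQX, Matrix.smul_mulVec]
      have e2 : Q *ᵥ (X *ᵥ v) = μ • (Q *ᵥ v) := by rw [hveq, Matrix.mulVec_smul]
      rw [sub_smul, ← e1, ← e2, sub_self]
    have hor : P *ᵥ v ≠ 0 ∨ Q *ᵥ v ≠ 0 := by
      by_contra h
      push_neg at h
      apply hv0
      have hv : (P + Q) *ᵥ v = v := by rw [hPQsum, Matrix.one_mulVec]
      rw [Matrix.add_mulVec, h.1, h.2, add_zero] at hv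
      exact hv.symm
    rcases hor with h | h
    · have := (smul_eq_zero.1 h1).resolve_right h
      have : μ = θ₁ := by
        have := sub_eq_zero.1 this
        linarith
      exact this.le
    · have := (smul_eq_zero.1 h2).resolve_right h
      have hμθ : μ = θ₂ := sub_eq_zero.1 this
      exact hμθ.le.trans hθ2le
  obtain ⟨i₀, hi₀⟩ := hθ₁mem
  have hmaxeig : (⨆ i, hX.eigenvalues i) = θ₁ := by
    apply le_antisymm
    · exact ciSup_le hub
    · exact hi₀ ▸ le_ciSup (Set.Finite.bddAbove (Set.finite_range _)) i₀
  rw [hmaxeig]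
  -- final arithmetic
  rw [hθ₁, he₁, hα, hβ, hc1v, hc2v]
  field_simp
  ring
end
end
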